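/- arXiv:2405.05859 — 10 statements merged into one kernel-verified Lean document; each statement's English description precedes it below -/
import Mathlib

section
/- Let P be a Poisson algebra and A an abelian subalgebra of maximal dimension among abelian subalgebras. If A is an ideal of the underlying Lie algebra P_L, then A is an ideal of P (i.e., also an ideal for the commutative product). -/
variable {F : Type*} [Field F] {P : Type*} [AddCommGroup P] [Module F P]

/-- A subalgebra of a dialgebra (subspace closed under both products). -/
def IsSubalg (mul br : P →ₗ[F] P →ₗ[F] P) (A : Submodule F P) : Prop :=
  ∀ x ∈ A, ∀ y ∈ A, mul x y ∈ A ∧ br x y ∈ A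

/-- An ideal of a dialgebra. -/
def IsIdeal (mul br : P →ₗ[F] P →ₗ[F] P) (A : Submodule F P) : Prop :=
  ∀ x ∈ A, ∀ y : P, mul x y ∈ A ∧ mul y x ∈ A ∧ br x y ∈ A ∧ br y x ∈ A

/-- An abelian subspace: all products of its elements vanish. -/
def IsAbelian (mul br : P →ₗ[F] P →ₗ[F] P) (A : Submodule F P) : Prop :=
  ∀ x ∈ A, ∀ y ∈ A, mul x y = 0 ∧ br x y = 0

/-- If `A` is an abelian subalgebra of maximal dimension of a Poisson algebra
and `A` is an ideal of the underlying Lie algebra, then `A` is an ideal of the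
Poisson algebra. -/
theorem abelian_max_lieIdeal_isIdeal [FiniteDimensional F P]
    (mul br : P →ₗ[F] P →ₗ[F] P)
    (hcomm : ∀ x y, mul x y = mul y x)
    (hassoc : ∀ x y z, mul (mul x y) z = mul x (mul y z))
    (hskew : ∀ x, br x x = 0)
    (hjac : ∀ x y z, br (br x y) z + br (br y z) x + br (br z x) y = 0)
    (hleib : ∀ x y z, br (mul x y) z = mul (br x z) y + mul x (br y z))
    (A : Submodule F P) (hab : IsAbelian mul br A)
    (hmax : ∀ B : Submodule F P, IsSubalg mul br B → IsAbelian mul br B →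
      Module.finrank F B ≤ Module.finrank F A)
    (hlie : ∀ a ∈ A, ∀ x : P, br a x ∈ A ∧ br x a ∈ A) :
    IsIdeal mul br A := by
  -- antisymmetry of the bracket
  have hanti : ∀ x y : P, br x y = - br y x := by
    intro x y
    have h := hskew (x + y)
    simp only [map_add, LinearMap.add_apply, hskew x, hskew y, zero_add, add_zero] at h
    exact eq_neg_of_add_eq_zero_right h
  -- key: if c multiplies/brackets to zero with all of A and with itself, then c ∈ A
  have key : ∀ c : P, (∀ b ∈ A, mul b c = 0 ∧ mul c b = 0 ∧ br b c = 0 ∧ br c b = 0) →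
      mul c c = 0 → c ∈ A := by
    intro c hc hcc
    set B : Submodule F P := A ⊔ Submodule.span F {c} with hB
    have hmem : ∀ u ∈ B, ∃ b ∈ A, ∃ t : F, u = b + t • c := by
      intro u hu
      rcases Submodule.mem_sup.1 hu with ⟨b, hb, z, hz, rfl⟩
      rcases Submodule.mem_span_singleton.1 hz with ⟨t, rfl⟩
      exact ⟨b, hb, t, rfl⟩
    have habB : IsAbelian mul br B := by
      intro u hu v hv
      rcases hmem u hu with ⟨b₁, hb₁, t₁, rfl⟩
      rcases hmem v hv with ⟨b₂, hb₂, t₂, rfl⟩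
      constructor
      · simp [map_add, map_smul, (hab b₁ hb₁ b₂ hb₂).1, (hc b₂ hb₂).2.1,
          (hc b₁ hb₁).1, hcc]
      · simp [map_add, map_smul, (hab b₁ hb₁ b₂ hb₂).2, (hc b₂ hb₂).2.2.2,
          (hc b₁ hb₁).2.2.1, hskew c]
    have hsubB : IsSubalg mul br B := by
      intro u hu v hv
      rw [(habB u hu v hv).1, (habB u hu v hv).2]
      exact ⟨B.zero_mem, B.zero_mem⟩
    have hle : Module.finrank F B ≤ Module.finrank F A := hmax B hsubB habB
    have hAB : A ≤ B := le_sup_left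
    have : A = B := Submodule.eq_of_le_of_finrank_le hAB hle
    rw [this]
    exact Submodule.mem_sup_right (Submodule.mem_span_singleton_self c)
  intro a ha x
  have hax : mul a x ∈ A := by
    apply key
    · intro b hb
      refine ⟨?_, ?_, ?_, ?_⟩
      · rw [hcomm b (mul a x), hassoc, hcomm x b, ← hassoc, (hab a ha b hb).1]
        simp
      · rw [hassoc, hcomm x b, ← hassoc, (hab a ha b hb).1]; simp
      · rw [hanti b (mul a x), hleib a x b, (hab a ha b hb).2,
          (hab a ha _ ((hlie b hb x).2) ).1]
        simp
      · rw [hleib a x b, (hab a ha b hb).2, (hab a ha _ ((hlie b hb x).2)).1]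
        simp
    · -- (a·x)·(a·x) = a·(a·(x·x)) = (a·a)·(x·x) = 0
      rw [hassoc a x (mul a x), hcomm x (mul a x), hassoc a x x, ← hassoc a a (mul x x),
        (hab a ha a ha).1]
      simp
  exact ⟨hax, by rw [hcomm x a]; exact hax, (hlie a ha x).1, (hlie a ha x).2⟩
end

section
/- Every finite-dimensional Poisson algebra P over a field has a one-dimensional subalgebra (a subspace spanned by a single element closed under both products). -/
variable {F : Type*} [Field F] {P : Type*} [AddCommGroup P] [Module F P]

/-- Every (nonzero) finite-dimensional Poisson algebra has a one-dimensional
subalgebra. -/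
theorem exists_one_dim_subalgebra [FiniteDimensional F P] [Nontrivial P]
    (mul br : P →ₗ[F] P →ₗ[F] P)
    (hcomm : ∀ x y, mul x y = mul y x)
    (hassoc : ∀ x y z, mul (mul x y) z = mul x (mul y z))
    (hskew : ∀ x, br x x = 0)
    (hjac : ∀ x y z, br (br x y) z + br (br y z) x + br (br z x) y = 0)
    (hleib : ∀ x y z, br (mul x y) z = mul (br x z) y + mul x (br y z)) :
    ∃ A : Submodule F P, IsSubalg mul br A ∧ Module.finrank F A = 1 := by
  classical
  -- It suffices to find a nonzero v with mul v v ∈ span {v}.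
  suffices h : ∃ v : P, v ≠ 0 ∧ mul v v ∈ Submodule.span F {v} by
    obtain ⟨v, hv, hvv⟩ := h
    refine ⟨Submodule.span F {v}, ?_, finrank_span_singleton hv⟩
    intro x hx y hy
    rw [Submodule.mem_span_singleton] at hx hy
    obtain ⟨a, rfl⟩ := hx
    obtain ⟨b, rfl⟩ := hy
    constructor
    · have : mul (a • v) (b • v) = (a * b) • mul v v := by
        simp only [map_smul, LinearMap.smul_apply, smul_smul, mul_comm a b]
      rw [this]
      exact Submodule.smul_mem _ _ hvv
    · have : br (a • v) (b • v) = (a * b) • br v v := by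
        simp only [map_smul, LinearMap.smul_apply, smul_smul, mul_comm a b]
      rw [this, hskew, smul_zero]
      exact Submodule.zero_mem _
  obtain ⟨a, ha⟩ := exists_ne (0 : P)
  set L : P →ₗ[F] P := mul a with hL
  have hLa : ∀ x : P, L x = mul a x := fun _ => rfl
  have hpow : ∀ (i j : ℕ) (x : P), (L ^ (i + j)) x = (L ^ i) ((L ^ j) x) := by
    intro i j x; rw [pow_add]; rfl
  -- key commutation lemma
  have key : ∀ (i : ℕ) (x y : P), mul ((L ^ i) x) y = (L ^ i) (mul x y) := by
    intro i
    induction i with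
    | zero => intro x y; simp
    | succ i ih =>
      intro x y
      have h1 : (L ^ (i + 1)) x = L ((L ^ i) x) := by
        rw [pow_succ']; rfl
      have h2 : (L ^ (i + 1)) (mul x y) = L ((L ^ i) (mul x y)) := by
        rw [pow_succ']; rfl
      rw [h1, h2, hLa, hLa, hassoc, ← ih, ← hassoc]
  have key2 : ∀ (i : ℕ) (x y : P), mul x ((L ^ i) y) = (L ^ i) (mul x y) := by
    intro i x y
    rw [hcomm, key, hcomm]
  by_cases hnil : ∃ k : ℕ, (L ^ k) a = 0
  · -- nilpotent case: take a power just below vanishing, its square is zero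
    have h0 : ¬ (L ^ 0) a = 0 := by simpa using ha
    set k := Nat.find hnil with hk
    have hk0 : (L ^ k) a = 0 := Nat.find_spec hnil
    have hkpos : 1 ≤ k := by
      rcases Nat.eq_zero_or_pos k with h | h
      · exact absurd (h ▸ hk0) h0
      · exact h
    have hw : (L ^ (k - 1)) a ≠ 0 := Nat.find_min hnil (Nat.sub_lt hkpos one_pos)
    refine ⟨(L ^ (k - 1)) a, hw, ?_⟩
    have : mul ((L ^ (k - 1)) a) ((L ^ (k - 1)) a) = 0 := by
      rw [key]
      have : mul a ((L ^ (k - 1)) a) = (L ^ (k - 1)) (L a) := by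
        rw [key2]
      rw [this]
      have hcomb : (L ^ (k - 1)) ((L ^ (k - 1)) (L a)) = (L ^ (k - 1)) ((L ^ k) a) := by
        congr 1
        have : (L ^ (k - 1)) (L a) = (L ^ ((k - 1) + 1)) a := by
          rw [pow_succ]; rfl
        rw [this, Nat.sub_add_cancel hkpos]
      rw [hcomb, hk0, map_zero]
    rw [this]
    exact Submodule.zero_mem _
  · -- non-nilpotent case: build an idempotent
    push_neg at hnil
    -- range of powers of L stabilizes
    have hanti : Antitone fun k : ℕ => LinearMap.range (L ^ k) := by
      apply antitone_nat_of_succ_le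
      intro m
      intro x hx
      obtain ⟨y, rfl⟩ := hx
      have : (L ^ (m + 1)) y = (L ^ m) (L y) := by rw [pow_succ]; rfl
      rw [this]
      exact ⟨L y, rfl⟩
    have hantif : Antitone fun k : ℕ => Module.finrank F (LinearMap.range (L ^ k)) :=
      fun i j hij => Submodule.finrank_mono (hanti hij)
    -- an antitone ℕ → ℕ attains its infimum
    set f : ℕ → ℕ := fun k => Module.finrank F (LinearMap.range (L ^ k)) with hf
    obtain ⟨n, hn⟩ : ∃ n, f n = sInf (Set.range f) := by
      have : sInf (Set.range f) ∈ Set.range f := Nat.sInf_mem ⟨f 0, 0, rfl⟩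
      obtain ⟨n, hn⟩ := this
      exact ⟨n, hn⟩
    have hstab : ∀ m, n ≤ m → LinearMap.range (L ^ m) = LinearMap.range (L ^ n) := by
      intro m hm
      apply Submodule.eq_of_le_of_finrank_le (hanti hm)
      have h1 : f m ≤ f n := hantif hm
      have h2 : sInf (Set.range f) ≤ f m := Nat.sInf_le ⟨m, rfl⟩
      have : f n ≤ f m := hn ▸ h2
      exact this
    have hr : LinearMap.range (L ^ (2 * n + 2)) = LinearMap.range (L ^ n) :=
      hstab _ (by omega)
    -- u = Lⁿ a ∈ range L^(2n+2); get c with L^(2n+2) c = u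
    set u := (L ^ n) a with hu
    have hmem : u ∈ LinearMap.range (L ^ (2 * n + 2)) := hr ▸ ⟨a, rfl⟩
    obtain ⟨c, hc⟩ := hmem
    -- key: mul u (mul u z) = L^(2n+2) z
    have habs : ∀ z : P, mul u (mul u z) = (L ^ (2 * n + 2)) z := by
      intro z
      have s1 : mul u z = (L ^ n) (mul a z) := by rw [hu, key]
      have h1 : mul a (mul a z) = (L ^ 2) z := by
        rw [pow_two]; rfl
      calc mul u (mul u z) = mul u ((L ^ n) (mul a z)) := by rw [s1]
        _ = (L ^ n) (mul u (mul a z)) := key2 n u (mul a z)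
        _ = (L ^ n) ((L ^ n) (mul a (mul a z))) := by rw [hu, key]
        _ = (L ^ n) ((L ^ n) ((L ^ 2) z)) := by rw [h1]
        _ = (L ^ (2 * n + 2)) z := by
              rw [show 2 * n + 2 = n + (n + 2) from by omega, hpow, hpow]
    set e := mul u c with he
    have hee : mul e e = e := by
      have step1 : mul e e = mul u (mul u (mul c c)) := by
        rw [he]
        calc mul (mul u c) (mul u c)
            = mul u (mul c (mul u c)) := hassoc u c (mul u c)
          _ = mul u (mul c (mul c u)) := by rw [hcomm u c]
          _ = mul u (mul (mul c c) u) := by rw [hassoc]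
          _ = mul u (mul u (mul c c)) := by rw [hcomm (mul c c) u]
      rw [step1, habs, ← key, hc]
    have hne : e ≠ 0 := by
      intro h0
      have heu : mul e u = u := by
        rw [he, hcomm (mul u c) u, habs c, hc]
      rw [h0] at heu
      simp only [map_zero, LinearMap.zero_apply] at heu
      exact hnil n heu.symm
    refine ⟨e, hne, ?_⟩
    rw [hee]
    exact Submodule.mem_span_singleton_self e
end

section
/- Let P be a finite-dimensional Poisson algebra over an algebraically closed field. If P has a maximal subalgebra A which is abelian, then A has codimension one in P. -/
variable {F : Type*} [Field F] {P : Type*} [AddCommGroup P] [Module F P]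

universe u

open Module

theorem exists_common_eigenvector_aux' [IsAlgClosed F] :
    ∀ (n : ℕ) (V : Type u) (_ : AddCommGroup V) (_ : @Module F V _ _),
    ∀ (_ : FiniteDimensional F V) (_ : Nontrivial V)
    (l : List (Module.End F V)), l.length = n →
    (∀ f ∈ l, ∀ g ∈ l, f * g = g * f) →
    ∃ v : V, v ≠ 0 ∧ ∀ f ∈ l, ∃ c : F, f v = c • v := by
  intro n
  induction n with
  | zero =>
    intro V iAG iM iFD iNT l hl _
    haveI := iFD; haveI := iNT
    obtain ⟨v, hv⟩ := exists_ne (0 : V)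
    refine ⟨v, hv, ?_⟩
    rw [List.length_eq_zero_iff.mp hl]
    simp
  | succ n ih =>
    intro V iAG iM iFD iNT l hl hc
    haveI := iFD; haveI := iNT
    match l with
    | f :: t =>
      obtain ⟨c, hc0⟩ := Module.End.exists_eigenvalue f
      set E := f.eigenspace c with hE
      have hEbot : E ≠ ⊥ := hc0
      have hnt : Nontrivial E := Submodule.nontrivial_iff_ne_bot.mpr hEbot
      have hmaps : ∀ g ∈ t, ∀ x ∈ E, g x ∈ E := by
        intro g hg x hx
        rw [hE, Module.End.mem_eigenspace_iff] at hx ⊢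
        have hcom : g * f = f * g :=
          hc g (List.mem_cons_of_mem f hg) f (List.mem_cons_self (a := f) (l := t))
        have : f (g x) = g (f x) := by
          have := congrArg (fun h => h x) hcom
          simpa [Module.End.mul_apply] using this.symm
        rw [this, hx, map_smul]
      -- restricted list
      let t' : List (Module.End F E) := t.attach.map
        (fun g => (g.1).restrict (p := E) (q := E) (hmaps g.1 g.2))
      have hlen : t'.length = n := by
        simp only [t', List.length_map, List.length_attach]
        simpa using Nat.succ_injective (by simpa using hl)
      have hc' : ∀ a ∈ t', ∀ b ∈ t', a * b = b * a := by
        intro a ha b hb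
        simp only [t', List.mem_map, List.mem_attach, true_and] at ha hb
        obtain ⟨⟨g, hg⟩, rfl⟩ := ha
        obtain ⟨⟨g', hg'⟩, rfl⟩ := hb
        ext x
        have hcom : g * g' = g' * g :=
          hc g (List.mem_cons_of_mem f hg) g' (List.mem_cons_of_mem f hg')
        have := congrArg (fun h => h (x : V)) hcom
        simp only [Module.End.mul_apply] at this
        simp [Module.End.mul_apply, LinearMap.restrict_apply, this.symm]
      obtain ⟨v, hv0, hv⟩ := ih E inferInstance inferInstance inferInstance hnt t' hlen hc'
      refine ⟨(v : V), by simpa using hv0, ?_⟩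
      intro g hg
      rcases List.mem_cons.mp hg with rfl | hg
      · exact ⟨c, Module.End.mem_eigenspace_iff.mp v.2⟩
      · have hg' : (g.restrict (p := E) (q := E) (hmaps g hg)) ∈ t' := by
          simp only [t', List.mem_map, List.mem_attach, true_and]
          exact ⟨⟨g, hg⟩, rfl⟩
        obtain ⟨d, hd⟩ := hv _ hg'
        refine ⟨d, ?_⟩
        have := congrArg (Subtype.val) hd
        simpa [LinearMap.restrict_apply] using this

/-- Over an algebraically closed field, a maximal subalgebra of a
finite-dimensional Poisson algebra which is abelian has codimension one. -/
theorem maximal_abelian_subalgebra_codim_one [IsAlgClosed F] [FiniteDimensional F P]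
    (mul br : P →ₗ[F] P →ₗ[F] P)
    (hcomm : ∀ x y, mul x y = mul y x)
    (hassoc : ∀ x y z, mul (mul x y) z = mul x (mul y z))
    (hskew : ∀ x, br x x = 0)
    (hjac : ∀ x y z, br (br x y) z + br (br y z) x + br (br z x) y = 0)
    (hleib : ∀ x y z, br (mul x y) z = mul (br x z) y + mul x (br y z))
    (A : Submodule F P) (hA : IsSubalg mul br A) (hne : A ≠ ⊤)
    (hmax : ∀ B : Submodule F P, IsSubalg mul br B → A < B → B = ⊤)
    (hab : IsAbelian mul br A) :
    Module.finrank F A + 1 = Module.finrank F P := by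
  classical
  have habm : ∀ a ∈ A, ∀ b ∈ A, mul a b = 0 := fun a ha b hb => (hab a ha b hb).1
  have habb : ∀ a ∈ A, ∀ b ∈ A, br a b = 0 := fun a ha b hb => (hab a ha b hb).2
  have hanti : ∀ x y : P, br y x = -br x y := by
    intro x y
    have h := hskew (x + y)
    simp only [map_add, LinearMap.add_apply, hskew x, hskew y, zero_add, add_zero] at h
    exact eq_neg_of_add_eq_zero_left h
  set π := A.mkQ with hπdef
  have hπs : Function.Surjective π := A.mkQ_surjective
  have hπ0 : ∀ x : P, π x = 0 ↔ x ∈ A := by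
    intro x; rw [hπdef, Submodule.mkQ_apply]; exact Submodule.Quotient.mk_eq_zero A
  have hQnt : Nontrivial (P ⧸ A) :=
    (Submodule.Quotient.nontrivial_iff (p := A)).mpr hne
  -- quotient operators
  let Lb : A → Module.End F (P ⧸ A) :=
    fun a => A.mapQ A (mul (a : P)) (fun x hx => (hA _ a.2 x hx).1)
  let Rb : A → Module.End F (P ⧸ A) :=
    fun a => A.mapQ A (br.flip (a : P)) (fun x hx => (hA x hx _ a.2).2)
  have hLb : ∀ (a : A) (x : P), Lb a (π x) = π (mul (a : P) x) := by
    intro a x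
    simp [Lb, hπdef, Submodule.mapQ_apply]
  have hRb : ∀ (a : A) (x : P), Rb a (π x) = π (br x (a : P)) := by
    intro a x
    simp [Rb, hπdef, Submodule.mapQ_apply]
    exact rfl
  -- commutation relations on P ⧸ A
  have hLL : ∀ a b : A, (Lb a) * (Lb b) = (Lb b) * (Lb a) := by
    intro a b
    refine LinearMap.ext fun q => ?_
    obtain ⟨x, rfl⟩ := hπs q
    simp only [Module.End.mul_apply, hLb]
    congr 1
    rw [← hassoc, hcomm (a : P) (b : P), hassoc]
  have hRR : ∀ a b : A, (Rb a) * (Rb b) = (Rb b) * (Rb a) := by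
    intro a b
    refine LinearMap.ext fun q => ?_
    obtain ⟨x, rfl⟩ := hπs q
    simp only [Module.End.mul_apply, hRb]
    congr 1
    have hj := hjac x (b : P) (a : P)
    rw [habb _ b.2 _ a.2, map_zero, LinearMap.zero_apply, add_zero] at hj
    have h1 : br (br x (b : P)) (a : P) = -br (br (a:P) x) (b:P) :=
      eq_neg_of_add_eq_zero_left hj
    rw [h1, hanti x (a : P)]
    simp
  have hLR : ∀ a b : A, (Lb a) * (Rb b) = (Rb b) * (Lb a) := by
    intro a b
    refine LinearMap.ext fun q => ?_
    obtain ⟨x, rfl⟩ := hπs q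
    simp only [Module.End.mul_apply, hRb, hLb]
    congr 1
    have h := hleib (a : P) x (b : P)
    rw [habb _ a.2 _ b.2, map_zero, LinearMap.zero_apply, zero_add] at h
    exact h.symm
  -- common eigenvector (for a basis of A)
  let bA := Module.finBasis F A
  obtain ⟨w, hw0, hwlL, hwlR⟩ : ∃ w : P ⧸ A, w ≠ 0 ∧
      (∀ i, ∃ c : F, Lb (bA i) w = c • w) ∧ (∀ i, ∃ c : F, Rb (bA i) w = c • w) := by
    let l : List (Module.End F (P ⧸ A)) :=
      ((List.finRange (finrank F A)).map fun i => Lb (bA i)) ++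
      ((List.finRange (finrank F A)).map fun i => Rb (bA i))
    have hmemL : ∀ i, Lb (bA i) ∈ l := by
      intro i
      simp only [l, List.mem_append, List.mem_map, List.mem_finRange, true_and]
      exact Or.inl ⟨i, rfl⟩
    have hmemR : ∀ i, Rb (bA i) ∈ l := by
      intro i
      simp only [l, List.mem_append, List.mem_map, List.mem_finRange, true_and]
      exact Or.inr ⟨i, rfl⟩
    have hmeml : ∀ f ∈ l, (∃ a : A, f = Lb a) ∨ (∃ a : A, f = Rb a) := by
      intro f hf
      simp only [l, List.mem_append, List.mem_map, List.mem_finRange, true_and] at hf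
      rcases hf with ⟨i, rfl⟩ | ⟨i, rfl⟩
      · exact Or.inl ⟨bA i, rfl⟩
      · exact Or.inr ⟨bA i, rfl⟩
    have hcl : ∀ f ∈ l, ∀ g ∈ l, f * g = g * f := by
      intro f hf g hg
      rcases hmeml f hf with ⟨a, rfl⟩ | ⟨a, rfl⟩ <;> rcases hmeml g hg with ⟨b, rfl⟩ | ⟨b, rfl⟩
      · exact hLL a b
      · exact hLR a b
      · exact (hLR b a).symm
      · exact hRR a b
    obtain ⟨w, hw0, hwl⟩ :=
      exists_common_eigenvector_aux' l.length (P ⧸ A) inferInstance inferInstance inferInstance hQnt l rfl hcl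
    exact ⟨w, hw0, fun i => hwl _ (hmemL i), fun i => hwl _ (hmemR i)⟩
  obtain ⟨v, rfl⟩ := hπs w
  have hvA : v ∉ A := fun h => hw0 ((hπ0 v).mpr h)
  -- eigen property for every element of A, via linearity
  have heigL : ∀ a : A, π (mul (a : P) v) ∈ Submodule.span F {π v} := by
    let φ : A →ₗ[F] P ⧸ A := π.comp ((mul.flip v).comp A.subtype)
    have hφ : ∀ a : A, φ a = π (mul (a : P) v) := fun a => rfl
    intro a
    rw [← hφ]
    have ha : a ∈ Submodule.span F (Set.range ⇑bA) := by rw [Basis.span_eq]; trivial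
    have himg := Submodule.apply_mem_span_image_of_mem_span φ ha
    refine Submodule.span_le.mpr ?_ himg
    rintro _ ⟨_, ⟨i, rfl⟩, rfl⟩
    rw [hφ, ← hLb]
    obtain ⟨c, hc⟩ := hwlL i
    rw [hc]
    exact Submodule.smul_mem _ _ (Submodule.mem_span_singleton_self _)
  have heigR : ∀ a : A, π (br v (a : P)) ∈ Submodule.span F {π v} := by
    let φ : A →ₗ[F] P ⧸ A := π.comp ((br v).comp A.subtype)
    have hφ : ∀ a : A, φ a = π (br v (a : P)) := fun a => rfl
    intro a
    rw [← hφ]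
    have ha : a ∈ Submodule.span F (Set.range ⇑bA) := by rw [Basis.span_eq]; trivial
    have himg := Submodule.apply_mem_span_image_of_mem_span φ ha
    refine Submodule.span_le.mpr ?_ himg
    rintro _ ⟨_, ⟨i, rfl⟩, rfl⟩
    rw [hφ, ← hRb]
    obtain ⟨c, hc⟩ := hwlR i
    rw [hc]
    exact Submodule.smul_mem _ _ (Submodule.mem_span_singleton_self _)
  -- L eigenvalues vanish
  have hL0 : ∀ a ∈ A, mul a v ∈ A := by
    intro a ha
    obtain ⟨c, hcs⟩ := Submodule.mem_span_singleton.mp (heigL ⟨a, ha⟩)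
    have hc' : π (mul a v) = c • π v := hcs.symm
    have h1 : mul a (mul a v) = 0 := by
      rw [← hassoc, habm a ha a ha, map_zero, LinearMap.zero_apply]
    have h3 : Lb ⟨a, ha⟩ (π (mul a v)) = π (mul a (mul a v)) := hLb ⟨a, ha⟩ (mul a v)
    have h2 : π (mul a (mul a v)) = (c * c) • π v := by
      rw [← h3, hc', map_smul]
      have h4 : Lb ⟨a, ha⟩ (π v) = π (mul a v) := hLb ⟨a, ha⟩ v
      rw [h4, hc', smul_smul]
    rw [h1, map_zero] at h2
    have hc0 : c = 0 := by
      rcases smul_eq_zero.mp h2.symm with h | h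
      · exact mul_self_eq_zero.mp h
      · exact absurd h hw0
    rw [← hπ0, hc', hc0, zero_smul]
  -- powers of v
  let wp : ℕ → P := fun k => Nat.rec v (fun _ x => mul v x) k
  have wp0 : wp 0 = v := rfl
  have wps : ∀ k, wp (k + 1) = mul v (wp k) := fun k => rfl
  have L1 : ∀ k, ∀ a ∈ A, mul a (wp k) ∈ A := by
    intro k
    induction k with
    | zero => exact hL0
    | succ k ih =>
      intro a ha
      have he : mul a (wp (k + 1)) = mul (mul a v) (wp k) := by rw [wps, hassoc]
      rw [he]
      exact ih (mul a v) (hL0 a ha)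
  have L2 : ∀ j k, mul (wp j) (wp k) = wp (j + k + 1) := by
    intro j
    induction j with
    | zero =>
      intro k
      have he : 0 + k + 1 = k + 1 := by omega
      rw [wp0, he]
    | succ j ih =>
      intro k
      have he : j + 1 + k + 1 = j + k + 1 + 1 := by omega
      rw [wps, hassoc, ih k, he]
  have L5a : ∀ k, br (wp k) v = 0 := by
    intro k
    induction k with
    | zero => rw [wp0]; exact hskew v
    | succ k ih =>
      rw [wps, hleib v (wp k) v, hskew v, ih]
      simp
  have L5 : ∀ k j, br (wp j) (wp k) = 0 := by
    intro k
    induction k with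
    | zero => intro j; rw [wp0]; exact L5a j
    | succ k ih =>
      intro j
      have h1 : br v (wp j) = 0 := by rw [hanti (wp j) v, L5a j, neg_zero]
      have h3 : br (wp k) (wp j) = 0 := by rw [hanti (wp j) (wp k), ih j, neg_zero]
      rw [wps, hanti (mul v (wp k)) (wp j), hleib v (wp k) (wp j), h1, h3]
      simp
  -- the span of the powers, and the subalgebra C
  set Sp : Submodule F P := Submodule.span F (Set.range wp) with hSpdef
  have hwpSp : ∀ k, wp k ∈ Sp := fun k => Submodule.subset_span ⟨k, rfl⟩
  have hvSp : v ∈ Sp := hwpSp 0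
  have hSpA : ∀ a ∈ A, ∀ s ∈ Sp, mul a s ∈ A := by
    intro a ha s hs
    have hle : Sp ≤ A.comap (mul a) := by
      rw [hSpdef, Submodule.span_le]; rintro _ ⟨k, rfl⟩; exact L1 k a ha
    exact hle hs
  have hSpmul : ∀ s ∈ Sp, ∀ t ∈ Sp, mul s t ∈ Sp := by
    have step1 : ∀ k, ∀ t ∈ Sp, mul (wp k) t ∈ Sp := by
      intro k t ht
      have hle : Sp ≤ Sp.comap (mul (wp k)) := by
        rw [hSpdef, Submodule.span_le]; rintro _ ⟨j, rfl⟩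
        simp only [SetLike.mem_coe, Submodule.mem_comap]
        rw [L2 k j]
        exact Submodule.subset_span ⟨k + j + 1, rfl⟩
      exact hle ht
    intro s hs t ht
    have hle : Sp ≤ Sp.comap (mul.flip t) := by
      rw [hSpdef, Submodule.span_le]; rintro _ ⟨k, rfl⟩
      simp only [SetLike.mem_coe, Submodule.mem_comap, LinearMap.flip_apply]
      exact step1 k t ht
    have := hle hs
    simpa [Submodule.mem_comap, LinearMap.flip_apply] using this
  have hSpbr0 : ∀ s ∈ Sp, ∀ t ∈ Sp, br s t = 0 := by
    have step1 : ∀ j, ∀ t ∈ Sp, br (wp j) t = 0 := by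
      intro j t ht
      have hle : Sp ≤ LinearMap.ker (br (wp j)) := by
        rw [hSpdef, Submodule.span_le]; rintro _ ⟨k, rfl⟩
        simp only [SetLike.mem_coe, LinearMap.mem_ker]
        exact L5 k j
      exact hle ht
    intro s hs t ht
    have hle : Sp ≤ LinearMap.ker (br.flip t) := by
      rw [hSpdef, Submodule.span_le]; rintro _ ⟨j, rfl⟩
      simp only [SetLike.mem_coe, LinearMap.mem_ker, LinearMap.flip_apply]
      exact step1 j t ht
    simpa using hle hs
  set C : Submodule F P := A ⊔ Sp with hCdef
  have hAC : A ≤ C := le_sup_left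
  have hSpC : Sp ≤ C := le_sup_right
  have hmulvA : ∀ b ∈ A, mul v b ∈ A := fun b hb => by rw [hcomm]; exact hL0 b hb
  have hmulvC : ∀ y ∈ C, mul v y ∈ C := by
    intro y hy
    obtain ⟨b, hb, s, hs, rfl⟩ := Submodule.mem_sup.mp hy
    rw [map_add]
    exact add_mem (hAC (hmulvA b hb)) (hSpC (hSpmul v hvSp s hs))
  have hbrvA : ∀ a ∈ A, br v a ∈ C := by
    intro a ha
    obtain ⟨c, hc⟩ := Submodule.mem_span_singleton.mp (heigR ⟨a, ha⟩)
    have hmem : br v a - c • v ∈ A := by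
      rw [← hπ0, map_sub, map_smul, ← hc, sub_self]
    have hre : br v a = (br v a - c • v) + c • v := by abel
    rw [hre]
    exact add_mem (hAC hmem) (hSpC (Submodule.smul_mem _ _ hvSp))
  have L3 : ∀ k, ∀ a ∈ A, br (wp k) a ∈ C := by
    intro k
    induction k with
    | zero => intro a ha; rw [wp0]; exact hbrvA a ha
    | succ k ih =>
      intro a ha
      rw [wps, hleib v (wp k) a]
      refine add_mem ?_ (hmulvC _ (ih a ha))
      obtain ⟨c, hc⟩ := Submodule.mem_span_singleton.mp (heigR ⟨a, ha⟩)
      have hmem : br v a - c • v ∈ A := by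
        rw [← hπ0, map_sub, map_smul, ← hc, sub_self]
      have h5 : mul (br v a - c • v) (wp k) = mul (br v a) (wp k) - c • mul v (wp k) := by
        rw [map_sub, map_smul]
        rfl
      have hsum : mul (br v a) (wp k) = mul (br v a - c • v) (wp k) + c • mul v (wp k) := by
        rw [h5, sub_add_cancel]
      rw [hsum]
      refine add_mem (hAC (L1 k _ hmem)) (hSpC (Submodule.smul_mem _ _ ?_))
      rw [← wps]
      exact hwpSp (k + 1)
  have hSpbrA : ∀ a ∈ A, ∀ s ∈ Sp, br s a ∈ C := by
    intro a ha s hs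
    have hle : Sp ≤ C.comap (br.flip a) := by
      rw [hSpdef, Submodule.span_le]; rintro _ ⟨k, rfl⟩
      simp only [SetLike.mem_coe, Submodule.mem_comap, LinearMap.flip_apply]
      exact L3 k a ha
    have := hle hs
    simpa [Submodule.mem_comap, LinearMap.flip_apply] using this
  have hCsub : IsSubalg mul br C := by
    intro x hx y hy
    obtain ⟨b, hb, s, hs, rfl⟩ := Submodule.mem_sup.mp hx
    obtain ⟨b', hb', t, ht, rfl⟩ := Submodule.mem_sup.mp hy
    constructor
    · have hexp : mul (b + s) (b' + t) = mul b b' + mul b t + mul s b' + mul s t := by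
        simp only [map_add, LinearMap.add_apply]
        abel
      rw [hexp, habm b hb b' hb', zero_add]
      refine add_mem (add_mem ?_ ?_) ?_
      · exact hAC (hSpA b hb t ht)
      · rw [hcomm]; exact hAC (hSpA b' hb' s hs)
      · exact hSpC (hSpmul s hs t ht)
    · have hexp : br (b + s) (b' + t) = br b b' + br b t + br s b' + br s t := by
        simp only [map_add, LinearMap.add_apply]
        abel
      rw [hexp, habb b hb b' hb', zero_add, hSpbr0 s hs t ht, add_zero]
      refine add_mem ?_ (hSpbrA b' hb' s hs)
      rw [hanti t b]
      exact neg_mem (hSpbrA b hb t ht)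
  have hACne : A ≠ C := by
    intro h
    exact hvA (by rw [h]; exact hSpC hvSp)
  have hCtop : C = ⊤ := hmax C hCsub (lt_of_le_of_ne hAC hACne)
  have P1 : ∀ a ∈ A, ∀ x : P, mul a x ∈ A := by
    intro a ha x
    have hx : x ∈ C := by rw [hCtop]; trivial
    obtain ⟨b, hb, s, hs, rfl⟩ := Submodule.mem_sup.mp hx
    rw [map_add]
    exact add_mem (by rw [habm a ha b hb]; exact zero_mem A) (hSpA a ha s hs)
  have claimK : ∀ x y : P, ∃ a ∈ A, ∃ b ∈ A, π (br x y) = π (br x b) - π (br y a) := by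
    intro x y
    have hx : x ∈ C := by rw [hCtop]; trivial
    have hy : y ∈ C := by rw [hCtop]; trivial
    obtain ⟨ax, hax, s, hs, rfl⟩ := Submodule.mem_sup.mp hx
    obtain ⟨ay, hay, t, ht, rfl⟩ := Submodule.mem_sup.mp hy
    refine ⟨ax, hax, ay, hay, ?_⟩
    have e1 : br (ax + s) (ay + t) = br ax t + br s ay := by
      simp only [map_add, LinearMap.add_apply]
      rw [habb ax hax ay hay, hSpbr0 s hs t ht]
      abel
    have e2 : br (ax + s) ay = br s ay := by
      simp only [map_add, LinearMap.add_apply]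
      rw [habb ax hax ay hay, zero_add]
    have e3 : br (ay + t) ax = -br ax t := by
      simp only [map_add, LinearMap.add_apply]
      rw [habb ay hay ax hax, zero_add, hanti ax t]
    rw [e1, e2, e3, map_add, map_neg]
    abel

  -- multiplication descends to the quotient
  let f1 : P →ₗ[F] P →ₗ[F] P ⧸ A := mul.compr₂ π
  have hf1 : ∀ x y, f1 x y = π (mul x y) := fun x y => rfl
  have hker1 : A ≤ LinearMap.ker f1 := by
    intro a ha
    rw [LinearMap.mem_ker]
    apply LinearMap.ext
    intro y
    rw [LinearMap.zero_apply, hf1]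
    exact (hπ0 _).mpr (P1 a ha y)
  let m2 : (P ⧸ A) →ₗ[F] P →ₗ[F] P ⧸ A := A.liftQ f1 hker1
  have hm2 : ∀ x y, m2 (π x) y = π (mul x y) := by
    intro x y
    have h := Submodule.liftQ_apply (p := A) f1 (h := hker1) x
    calc m2 (π x) y = (f1 x) y := by
          rw [hπdef, Submodule.mkQ_apply]
          rw [show m2 (Submodule.Quotient.mk x) = f1 x from h]
      _ = π (mul x y) := rfl
  let m3 : P →ₗ[F] (P ⧸ A) →ₗ[F] P ⧸ A := m2.flip
  have hker3 : A ≤ LinearMap.ker m3 := by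
    intro a ha
    rw [LinearMap.mem_ker]
    apply LinearMap.ext
    intro q
    obtain ⟨x, rfl⟩ := hπs q
    rw [LinearMap.zero_apply]
    have h1 : m3 a (π x) = π (mul x a) := by
      show m2 (π x) a = π (mul x a)
      exact hm2 x a
    rw [h1]
    refine (hπ0 _).mpr ?_
    rw [hcomm]
    exact P1 a ha x
  let mbar : (P ⧸ A) →ₗ[F] (P ⧸ A) →ₗ[F] P ⧸ A := (A.liftQ m3 hker3).flip
  have hmbar : ∀ x y, mbar (π x) (π y) = π (mul x y) := by
    intro x y
    have h := Submodule.liftQ_apply (p := A) m3 (h := hker3) y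
    calc mbar (π x) (π y) = (A.liftQ m3 hker3) (π y) (π x) := rfl
      _ = (m3 y) (π x) := by
          rw [show π y = Submodule.Quotient.mk y from rfl]
          rw [show (A.liftQ m3 hker3) (Submodule.Quotient.mk y) = m3 y from h]
      _ = m2 (π x) y := rfl
      _ = π (mul x y) := hm2 x y
  let M : Module.End F (P ⧸ A) := A.mapQ A (mul v) (fun x hx => hmulvA x hx)
  have hM : ∀ x, M (π x) = π (mul v x) := by
    intro x
    simp [M, hπdef, Submodule.mapQ_apply]
  have hmc : ∀ q r, mbar q r = mbar r q := by
    intro q r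
    obtain ⟨x, rfl⟩ := hπs q
    obtain ⟨y, rfl⟩ := hπs r
    rw [hmbar, hmbar, hcomm]
  have hLmM : ∀ q r, mbar (M q) r = M (mbar q r) := by
    intro q r
    obtain ⟨x, rfl⟩ := hπs q
    obtain ⟨y, rfl⟩ := hπs r
    rw [hM, hmbar, hmbar, hM, hassoc]
  have hMk : ∀ (k : ℕ) (q r : P ⧸ A), (M ^ k) (mbar q r) = mbar ((M ^ k) q) r := by
    intro k
    induction k with
    | zero => intro q r; simp
    | succ k ih =>
      intro q r
      rw [pow_succ]
      simp only [Module.End.mul_apply]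
      rw [← hLmM, ih]
  have hFc : ∀ a : A, ∃ c : F, (Rb a) (π v) = c • π v ∧
      ∀ q, Rb a (M q) = M (Rb a q) + c • M q := by
    intro a
    obtain ⟨c, hc⟩ := Submodule.mem_span_singleton.mp (heigR a)
    have hc1 : Rb a (π v) = c • π v := by rw [hRb, ← hc]
    refine ⟨c, hc1, ?_⟩
    intro q
    obtain ⟨x, rfl⟩ := hπs q
    have ha0 : br v (a : P) - c • v ∈ A := by
      rw [← hπ0, map_sub, map_smul, ← hc, sub_self]
    have e2 : mul (br v (a : P)) x = mul (br v (a : P) - c • v) x + c • mul v x := by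
      rw [map_sub, map_smul, LinearMap.sub_apply, LinearMap.smul_apply, sub_add_cancel]
    have e3 : π (mul (br v (a : P) - c • v) x) = 0 := (hπ0 _).mpr (P1 _ ha0 x)
    calc Rb a (M (π x)) = π (br (mul v x) (a : P)) := by rw [hM, hRb]
      _ = π (mul (br v (a : P)) x) + π (mul v (br x (a : P))) := by
          rw [hleib v x (a : P), map_add]
      _ = (π (mul (br v (a : P) - c • v) x) + c • π (mul v x)) + π (mul v (br x (a : P))) := by
          rw [e2, map_add, map_smul]
      _ = c • M (π x) + M (π (br x (a : P))) := by rw [e3, zero_add, ← hM, ← hM]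
      _ = M (Rb a (π x)) + c • M (π x) := by rw [← hRb]; abel
  have hRMk : ∀ (a : A) (c : F), (∀ q, Rb a (M q) = M (Rb a q) + c • M q) →
      ∀ (k : ℕ) (q : P ⧸ A),
        Rb a ((M ^ k) q) = (M ^ k) (Rb a q) + ((k : F) * c) • (M ^ k) q := by
    intro a c hrel k
    induction k with
    | zero => intro q; simp
    | succ k ih =>
      intro q
      have h2 : ∀ r : P ⧸ A, M ((M ^ k) r) = (M ^ (k + 1)) r := by
        intro r
        rw [pow_succ']
        rfl
      rw [← h2, hrel ((M ^ k) q), ih q, map_add, map_smul, h2, h2]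
      have hsc : ((k : F) * c) • (M ^ (k + 1)) q + c • (M ^ (k + 1)) q
          = (((k + 1 : ℕ) : F) * c) • (M ^ (k + 1)) q := by
        rw [← add_smul]
        congr 1
        push_cast
        ring
      rw [add_assoc, hsc]
  -- main contradiction machine
  have key : ∀ Bb : Submodule F (P ⧸ A), Bb ≠ ⊥ → Bb ≠ ⊤ →
      (∀ q ∈ Bb, ∀ r ∈ Bb, mbar q r ∈ Bb) → (∀ (a : A), ∀ q ∈ Bb, Rb a q ∈ Bb) → False := by
    intro Bb h0 hT hm hr
    set B : Submodule F P := Bb.comap π with hBdef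
    have hmemB : ∀ x : P, x ∈ B ↔ π x ∈ Bb := fun x => Iff.rfl
    have hAB : A ≤ B := by
      intro x hx
      have : π x ∈ Bb := by
        rw [(hπ0 x).mpr hx]
        exact zero_mem Bb
      exact this
    have hBsub : IsSubalg mul br B := by
      intro x hx y hy
      have hx' : π x ∈ Bb := hx
      have hy' : π y ∈ Bb := hy
      constructor
      · have : π (mul x y) ∈ Bb := by
          rw [← hmbar]
          exact hm _ hx' _ hy'
        exact this
      · obtain ⟨a, ha, b, hb, he⟩ := claimK x y
        have h1 : Rb ⟨b, hb⟩ (π x) = π (br x b) := hRb ⟨b, hb⟩ x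
        have h2 : Rb ⟨a, ha⟩ (π y) = π (br y a) := hRb ⟨a, ha⟩ y
        have : π (br x y) ∈ Bb := by
          rw [he, ← h1, ← h2]
          exact sub_mem (hr _ _ hx') (hr _ _ hy')
        exact this
    have hABlt : A < B := by
      obtain ⟨q, hq, hq0⟩ := Submodule.exists_mem_ne_zero_of_ne_bot h0
      obtain ⟨x, rfl⟩ := hπs q
      refine lt_of_le_of_ne hAB fun h => ?_
      have hxB : x ∈ B := hq
      rw [← h] at hxB
      exact hq0 ((hπ0 x).mpr hxB)
    have hBtop := hmax B hBsub hABlt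
    apply hT
    rw [eq_top_iff]
    intro q _
    obtain ⟨x, rfl⟩ := hπs q
    have hx : x ∈ B := by rw [hBtop]; trivial
    exact hx
  -- rank bookkeeping
  have hrank : finrank F (P ⧸ A) + finrank F A = finrank F P :=
    Submodule.finrank_quotient_add_finrank A
  by_contra hfin
  have h2 : 2 ≤ finrank F (P ⧸ A) := by
    have hpos : 0 < finrank F (P ⧸ A) := Module.finrank_pos
    omega
  have hnetop : ∀ u : P ⧸ A, u ≠ 0 → Submodule.span F {u} ≠ ⊤ := by
    intro u hu h
    have hfr := finrank_span_singleton (K := F) hu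
    rw [h, finrank_top] at hfr
    omega
  by_cases hM0 : M = 0
  · refine key (Submodule.span F {π v}) ?_ (hnetop _ hw0) ?_ ?_
    · intro h
      exact hw0 (Submodule.span_singleton_eq_bot.mp h)
    · intro q hq r hr
      obtain ⟨cq, rfl⟩ := Submodule.mem_span_singleton.mp hq
      obtain ⟨cr, rfl⟩ := Submodule.mem_span_singleton.mp hr
      have hvv : mbar (π v) (π v) = 0 := by
        rw [hmbar, ← hM, hM0]
        rfl
      simp only [map_smul, LinearMap.smul_apply, hvv, smul_zero]
      exact zero_mem _
    · intro a q hq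
      obtain ⟨cq, rfl⟩ := Submodule.mem_span_singleton.mp hq
      rw [map_smul]
      refine Submodule.smul_mem _ _ ?_
      have h1 : Rb a (π v) = π (br v (a : P)) := hRb a v
      rw [h1]
      exact heigR a
  · by_cases hMnil : IsNilpotent M
    · refine key (LinearMap.range M) ?_ ?_ ?_ ?_
      · intro h
        exact hM0 (LinearMap.range_eq_bot.mp h)
      · intro h
        obtain ⟨n, hn⟩ := hMnil
        have hsur : Function.Surjective ⇑M := LinearMap.range_eq_top.mp h
        have hinj : Function.Injective ⇑M := LinearMap.injective_iff_surjective.mpr hsur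
        have hinjn : ∀ k, Function.Injective ⇑(M ^ k) := by
          intro k
          induction k with
          | zero =>
            rw [pow_zero]
            intro x y hxy
            simpa using hxy
          | succ k ih =>
            rw [pow_succ]
            intro x y hxy
            simp only [Module.End.mul_apply] at hxy
            exact hinj (ih hxy)
        obtain ⟨x, hx⟩ := exists_ne (0 : P ⧸ A)
        apply hx
        apply hinjn n
        rw [hn]
        simp
      · intro q hq r hr
        obtain ⟨q0, rfl⟩ := hq
        rw [hLmM]
        exact ⟨mbar q0 r, rfl⟩
      · intro a q hq
        obtain ⟨q0, rfl⟩ := hq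
        obtain ⟨c, hc1, hc2⟩ := hFc a
        rw [hc2]
        exact add_mem ⟨Rb a q0, rfl⟩ (Submodule.smul_mem _ _ ⟨q0, rfl⟩)
    · set N := finrank F (P ⧸ A) with hNdef
      by_cases hker : LinearMap.ker (M ^ N) = ⊥
      · have hinj : Function.Injective ⇑M := by
          rw [← LinearMap.ker_eq_bot, eq_bot_iff]
          intro x hx
          rw [LinearMap.mem_ker] at hx
          have hxk : x ∈ LinearMap.ker (M ^ N) := by
            rw [LinearMap.mem_ker]
            obtain ⟨k, hk⟩ : ∃ k, N = k + 1 := ⟨N - 1, by omega⟩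
            rw [hk, pow_succ, Module.End.mul_apply, hx, map_zero]
          rw [hker] at hxk
          simpa using hxk
        have hsur : Function.Surjective ⇑M := LinearMap.injective_iff_surjective.mp hinj
        obtain ⟨u, hu⟩ := hsur (π v)
        have hu0 : u ≠ 0 := by
          intro h
          rw [h, map_zero] at hu
          exact hw0 hu.symm
        have hMuu : mbar u u = u := by
          apply hinj
          apply hinj
          calc M (M (mbar u u)) = M (mbar (M u) u) := by rw [hLmM]
            _ = M (mbar u (π v)) := by rw [hu, hmc]
            _ = mbar (M u) (π v) := by rw [hLmM]
            _ = mbar (π v) (π v) := by rw [hu]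
            _ = M (π v) := by rw [hmbar, hM]
            _ = M (M u) := by rw [hu]
        have hRu : ∀ a : A, Rb a u = 0 := by
          intro a
          obtain ⟨c, hc1, hc2⟩ := hFc a
          apply hinj
          rw [map_zero]
          have h3 := hc2 u
          rw [hu, hc1] at h3
          exact (right_eq_add.mp h3)
        refine key (Submodule.span F {u}) ?_ (hnetop u hu0) ?_ ?_
        · intro h
          exact hu0 (Submodule.span_singleton_eq_bot.mp h)
        · intro q hq r hr
          obtain ⟨cq, rfl⟩ := Submodule.mem_span_singleton.mp hq
          obtain ⟨cr, rfl⟩ := Submodule.mem_span_singleton.mp hr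
          simp only [map_smul, LinearMap.smul_apply, hMuu]
          exact Submodule.smul_mem _ _
            (Submodule.smul_mem _ _ (Submodule.mem_span_singleton_self u))
        · intro a q hq
          obtain ⟨cq, rfl⟩ := Submodule.mem_span_singleton.mp hq
          rw [map_smul, hRu a, smul_zero]
          exact zero_mem _
      · refine key (LinearMap.ker (M ^ N)) hker ?_ ?_ ?_
        · intro h
          exact hMnil ⟨N, LinearMap.ker_eq_top.mp h⟩
        · intro q hq r hr
          rw [LinearMap.mem_ker] at hq ⊢
          rw [hMk N q r, hq, map_zero, LinearMap.zero_apply]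
        · intro a q hq
          rw [LinearMap.mem_ker] at hq ⊢
          obtain ⟨c, hc1, hc2⟩ := hFc a
          have hk := hRMk a c hc2 N q
          rw [hq] at hk
          simpa using hk.symm
end

section
/- Let P be a finite-dimensional Poisson algebra of dimension n over an algebraically closed field, with both products nonzero (non-trivial). If P has a maximal subalgebra B which is abelian, then the derived subalgebra P^1) = P·P + [P,P] is contained in B, P is solvable, and P^2) = 0 (P is 2-step solvable). -/
variable {F : Type*} [Field F] {P : Type*} [AddCommGroup P] [Module F P]


section Aux

open Module

lemma exists_common_eigenvector {K V : Type*} [Field K] [IsAlgClosed K] [AddCommGroup V]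
    [Module K V] [FiniteDimensional K V] (S : Set (Module.End K V))
    (hS : ∀ f ∈ S, ∀ g ∈ S, ∀ v, f (g v) = g (f v))
    (W : Submodule K V) (hW : W ≠ ⊥) (hinv : ∀ f ∈ S, ∀ w ∈ W, f w ∈ W) :
    ∃ v ∈ W, v ≠ 0 ∧ ∀ f ∈ S, ∃ μ : K, f v = μ • v := by
  generalize hn : Module.finrank K W = n
  induction n using Nat.strong_induction_on generalizing W with
  | _ n ih =>
  by_cases hall : ∀ f ∈ S, ∀ μ : K,
      W ⊓ Module.End.eigenspace f μ ≠ ⊥ → W ≤ Module.End.eigenspace f μ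
  · obtain ⟨v, hvW, hv0⟩ := (Submodule.ne_bot_iff W).mp hW
    refine ⟨v, hvW, hv0, fun f hf => ?_⟩
    haveI : Nontrivial W := Submodule.nontrivial_iff_ne_bot.mpr hW
    have hres : ∀ w ∈ W, f w ∈ W := hinv f hf
    obtain ⟨μ, hμ⟩ := Module.End.exists_eigenvalue (f.restrict hres)
    obtain ⟨w, hw⟩ := hμ.exists_hasEigenvector
    have hfw : f (w : V) = μ • (w : V) := by
      have h1 := hw.apply_eq_smul
      have : ((f.restrict hres) w : V) = μ • (w : V) := by rw [h1]; rfl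
      rwa [LinearMap.restrict_coe_apply] at this
    have hwe : (w : V) ∈ W ⊓ Module.End.eigenspace f μ :=
      ⟨w.2, Module.End.mem_eigenspace_iff.mpr hfw⟩
    have hne : W ⊓ Module.End.eigenspace f μ ≠ ⊥ :=
      (Submodule.ne_bot_iff _).mpr ⟨w, hwe, by simpa using hw.2⟩
    exact ⟨μ, Module.End.mem_eigenspace_iff.mp (hall f hf μ hne hvW)⟩
  · push_neg at hall
    obtain ⟨f, hf, μ, hne, hnle⟩ := hall
    have hEW : W ⊓ Module.End.eigenspace f μ ≤ W := inf_le_left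
    have hlt : W ⊓ Module.End.eigenspace f μ < W :=
      lt_of_le_of_ne hEW (by intro h; exact hnle (h ▸ inf_le_right))
    have hEinv : ∀ g ∈ S, ∀ w ∈ W ⊓ Module.End.eigenspace f μ,
        g w ∈ W ⊓ Module.End.eigenspace f μ := by
      intro g hg w hw
      refine ⟨hinv g hg w hw.1, Module.End.mem_eigenspace_iff.mpr ?_⟩
      have hfw := Module.End.mem_eigenspace_iff.mp hw.2
      rw [hS f hf g hg w, hfw, map_smul]
    have hrank : Module.finrank K ↥(W ⊓ Module.End.eigenspace f μ) < n :=
      hn ▸ Submodule.finrank_lt_finrank_of_lt hlt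
    obtain ⟨v, hvE, h⟩ := ih _ hrank _ hne hEinv rfl
    exact ⟨v, hEW hvE, h⟩

lemma exists_sq_eq_smul {K V : Type*} [Field K] [IsAlgClosed K] [AddCommGroup V]
    [Module K V] [FiniteDimensional K V] (m : V →ₗ[K] V →ₗ[K] V)
    (hassoc : ∀ x y z, m (m x y) z = m x (m y z)) (x : V) (hx : x ≠ 0) :
    ∃ y : V, y ≠ 0 ∧ ∃ c : K, m y y = c • y := by
  set A := Submodule.span K (Set.range fun n => (m x)^[n] x) with hA
  have hxA : x ∈ A := Submodule.subset_span ⟨0, rfl⟩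
  have hmap : ∀ w ∈ A, m x w ∈ A := by
    intro w hw
    induction hw using Submodule.span_induction with
    | mem w hw =>
      obtain ⟨n, rfl⟩ := hw
      refine Submodule.subset_span ⟨n + 1, ?_⟩
      show (⇑(m x))^[n + 1] x = (m x) ((⇑(m x))^[n] x)
      rw [Function.iterate_succ_apply']
    | zero => rw [map_zero]; exact A.zero_mem
    | add a b _ _ ha hb => rw [map_add]; exact A.add_mem ha hb
    | smul t a _ ha => rw [map_smul]; exact A.smul_mem t ha
  haveI : Nontrivial A := Submodule.nontrivial_iff_ne_bot.mpr
    (fun h => hx (Submodule.mem_bot K |>.mp (h ▸ hxA)))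
  obtain ⟨μ, hμ⟩ := Module.End.exists_eigenvalue ((m x).restrict hmap)
  obtain ⟨w, hw⟩ := hμ.exists_hasEigenvector
  have hw0 : (w : V) ≠ 0 := by simpa using hw.2
  have hxw : m x (w : V) = μ • (w : V) := by
    have h1 := hw.apply_eq_smul
    have : (((m x).restrict hmap) w : V) = μ • (w : V) := by rw [h1]; rfl
    rwa [LinearMap.restrict_coe_apply] at this
  have key : ∀ u ∈ A, ∃ c : K, m u (w : V) = c • (w : V) := by
    intro u hu
    induction hu using Submodule.span_induction with
    | mem u hu =>
      obtain ⟨n, rfl⟩ := hu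
      induction n with
      | zero => exact ⟨μ, hxw⟩
      | succ n ihn =>
        obtain ⟨c, hc⟩ := ihn
        refine ⟨c * μ, ?_⟩
        show (m ((⇑(m x))^[n + 1] x)) ↑w = (c * μ) • ↑w
        have hc' : (m ((⇑(m x))^[n] x)) ↑w = c • ↑w := hc
        rw [Function.iterate_succ_apply', hassoc, hc', map_smul, hxw, smul_smul]
    | zero => exact ⟨0, by simp⟩
    | add a b _ _ ha hb =>
      obtain ⟨c, hc⟩ := ha; obtain ⟨d, hd⟩ := hb
      exact ⟨c + d, by rw [map_add, LinearMap.add_apply, hc, hd, add_smul]⟩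
    | smul t a _ ha =>
      obtain ⟨c, hc⟩ := ha
      exact ⟨t * c, by rw [map_smul, LinearMap.smul_apply, hc, smul_smul]⟩
  obtain ⟨c, hc⟩ := key (w : V) w.2
  exact ⟨w, hw0, c, hc⟩

end Aux

lemma bilin_expand' (f : P →ₗ[F] P →ₗ[F] P) (b b' y : P) (t t' : F) :
    f (b + t • y) (b' + t' • y)
      = f b b' + t' • f b y + t • f y b' + (t * t') • f y y := by
  simp only [map_add, map_smul, LinearMap.add_apply, LinearMap.smul_apply, smul_add, smul_smul]
  module

/-- span of all products `f a b` with `a ∈ A`, `b ∈ B`. -/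
def prodSpan (f : P →ₗ[F] P →ₗ[F] P) (A B : Submodule F P) : Submodule F P :=
  Submodule.span F {z | ∃ a ∈ A, ∃ b ∈ B, z = f a b}

/-- Derived series of a dialgebra: `P^0) = P`,
`P^(k+1)) = P^k)·P^k) + [P^k),P^k)]`. -/
def derSeries (mul br : P →ₗ[F] P →ₗ[F] P) : ℕ → Submodule F P
  | 0 => ⊤
  | (k + 1) => prodSpan mul (derSeries mul br k) (derSeries mul br k) ⊔
      prodSpan br (derSeries mul br k) (derSeries mul br k)

/-- If a non-trivial Poisson algebra over an algebraically closed field has a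
maximal subalgebra `B` which is abelian, then `P^1) ⊆ B`, `P` is solvable and
`P^2) = 0`. -/
theorem twoStepSolvable_of_maximal_abelian [IsAlgClosed F] [FiniteDimensional F P]
    (mul br : P →ₗ[F] P →ₗ[F] P)
    (hmul_ne : mul ≠ 0) (hbr_ne : br ≠ 0)
    (hcomm : ∀ x y, mul x y = mul y x)
    (hassoc : ∀ x y z, mul (mul x y) z = mul x (mul y z))
    (hskew : ∀ x, br x x = 0)
    (hjac : ∀ x y z, br (br x y) z + br (br y z) x + br (br z x) y = 0)
    (hleib : ∀ x y z, br (mul x y) z = mul (br x z) y + mul x (br y z))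
    (B : Submodule F P) (hB : IsSubalg mul br B) (hne : B ≠ ⊤)
    (hmax : ∀ C : Submodule F P, IsSubalg mul br C → B < C → C = ⊤)
    (hab : IsAbelian mul br B) :
    derSeries mul br 1 ≤ B ∧ (∃ m, derSeries mul br m = ⊥) ∧
      derSeries mul br 2 = ⊥ := by
  have hPB : ∀ p q : P, mul p q ∈ B ∧ br p q ∈ B := by
    classical
    have hskew' : ∀ x y : P, br x y = -br y x := by
      intro x y
      have h := hskew (x + y)
      simp only [map_add, LinearMap.add_apply, hskew x, hskew y, zero_add, add_zero] at h
      exact eq_neg_of_add_eq_zero_left (by rwa [add_comm] at h)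
    by_cases hN : ∀ p : P, ∀ b ∈ B, mul b p ∈ B ∧ br b p ∈ B
    · -- Case A : B is an ideal
      have hNmul : ∀ p : P, ∀ b ∈ B, mul p b ∈ B := fun p b hb => by
        rw [hcomm p b]; exact (hN p b hb).1
      have hNbr : ∀ p : P, ∀ b ∈ B, br p b ∈ B := fun p b hb => by
        rw [hskew' p b]; exact B.neg_mem (hN p b hb).2
      -- quotient bilinear map
      set Mq : P → (P ⧸ B) →ₗ[F] (P ⧸ B) := fun p =>
        Submodule.mapQ B B (mul p) (fun b hb => Submodule.mem_comap.mpr (hNmul p b hb)) with hMq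
      have MqApp : ∀ p q : P,
          Mq p (Submodule.Quotient.mk q) = Submodule.Quotient.mk (mul p q) := by
        intro p q
        show (Submodule.mapQ B B (mul p) (fun b hb => Submodule.mem_comap.mpr (hNmul p b hb)))
          (Submodule.Quotient.mk q) = Submodule.Quotient.mk (mul p q)
        rfl
      have MqAdd : ∀ p q, Mq (p + q) = Mq p + Mq q := by
        intro p q
        refine Submodule.linearMap_qext _ ?_
        ext z
        simp only [LinearMap.comp_apply, Submodule.mkQ_apply, LinearMap.add_apply]
        rw [MqApp, MqApp, MqApp, map_add, LinearMap.add_apply, Submodule.Quotient.mk_add]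
      have MqSmul : ∀ (t : F) (p : P), Mq (t • p) = t • Mq p := by
        intro t p
        refine Submodule.linearMap_qext _ ?_
        ext z
        simp only [LinearMap.comp_apply, Submodule.mkQ_apply, LinearMap.smul_apply]
        rw [MqApp, MqApp, map_smul, LinearMap.smul_apply, Submodule.Quotient.mk_smul]
      set M1 : P →ₗ[F] (P ⧸ B) →ₗ[F] (P ⧸ B) :=
        { toFun := Mq, map_add' := MqAdd, map_smul' := MqSmul } with hM1
      have M1App : ∀ p q : P,
          M1 p (Submodule.Quotient.mk q) = Submodule.Quotient.mk (mul p q) := MqApp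
      set mbar : (P ⧸ B) →ₗ[F] (P ⧸ B) →ₗ[F] (P ⧸ B) :=
        Submodule.liftQ B M1 (by
          intro b hb
          rw [LinearMap.mem_ker]
          refine Submodule.linearMap_qext _ ?_
          ext z
          simp only [LinearMap.comp_apply, Submodule.mkQ_apply, LinearMap.zero_comp,
            LinearMap.zero_apply]
          rw [M1App]
          exact (Submodule.Quotient.mk_eq_zero B).mpr (hN z b hb).1) with hmbar
      have mbarApp : ∀ p q : P,
          mbar (Submodule.Quotient.mk p) (Submodule.Quotient.mk q)
            = Submodule.Quotient.mk (mul p q) := by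
        intro p q
        rw [hmbar, Submodule.liftQ_apply]
        exact M1App p q
      have mbarAssoc : ∀ a b c : P ⧸ B, mbar (mbar a b) c = mbar a (mbar b c) := by
        intro a b c
        obtain ⟨p, rfl⟩ := Submodule.Quotient.mk_surjective B a
        obtain ⟨q, rfl⟩ := Submodule.Quotient.mk_surjective B b
        obtain ⟨r, rfl⟩ := Submodule.Quotient.mk_surjective B c
        rw [mbarApp, mbarApp, mbarApp, mbarApp, hassoc]
      have hex : ∃ x : P, x ∉ B := by
        by_contra h
        push_neg at h
        exact hne (Submodule.eq_top_iff'.mpr h)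
      obtain ⟨x₀, hx₀⟩ := hex
      have hx0q : (Submodule.Quotient.mk x₀ : P ⧸ B) ≠ 0 := by
        simpa [Submodule.Quotient.mk_eq_zero] using hx₀
      obtain ⟨ybar, hy0, c, hc⟩ := exists_sq_eq_smul mbar mbarAssoc _ hx0q
      obtain ⟨y, rfl⟩ := Submodule.Quotient.mk_surjective B ybar
      have hyB : y ∉ B := by
        intro h
        exact hy0 ((Submodule.Quotient.mk_eq_zero B).mpr h)
      have hs : mul y y - c • y ∈ B := by
        rw [mbarApp] at hc
        refine (Submodule.Quotient.eq B).mp ?_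
        rw [hc, Submodule.Quotient.mk_smul]
      have hyydec : mul y y = c • y + (mul y y - c • y) := by abel
      set C := B ⊔ Submodule.span F {y} with hC
      have hyC : y ∈ C := Submodule.mem_sup_right (Submodule.mem_span_singleton_self y)
      have hBleC : B ≤ C := le_sup_left
      have hCm : ∀ p ∈ C, ∃ b ∈ B, ∃ t : F, p = b + t • y := by
        intro p hp
        obtain ⟨b, hb, z, hz, rfl⟩ := Submodule.mem_sup.mp hp
        obtain ⟨t, rfl⟩ := Submodule.mem_span_singleton.mp hz
        exact ⟨b, hb, t, rfl⟩
      have hCsub : IsSubalg mul br C := by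
        intro p hp q hq
        obtain ⟨b, hb, t, rfl⟩ := hCm p hp
        obtain ⟨b', hb', t', rfl⟩ := hCm q hq
        constructor
        · rw [bilin_expand']
          refine C.add_mem (C.add_mem (C.add_mem ?_ ?_) ?_) ?_
          · rw [(hab b hb b' hb').1]; exact C.zero_mem
          · exact C.smul_mem _ (hBleC ((hN y b hb).1))
          · exact C.smul_mem _ (hBleC (hNmul y b' hb'))
          · rw [hyydec]
            exact C.smul_mem _ (C.add_mem (C.smul_mem c hyC) (hBleC hs))
        · rw [bilin_expand']
          refine C.add_mem (C.add_mem (C.add_mem ?_ ?_) ?_) ?_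
          · rw [(hab b hb b' hb').2]; exact C.zero_mem
          · exact C.smul_mem _ (hBleC ((hN y b hb).2))
          · exact C.smul_mem _ (hBleC (hNbr y b' hb'))
          · rw [hskew y, smul_zero]; exact C.zero_mem
      have hCtop : C = ⊤ := hmax C hCsub (lt_of_le_of_ne hBleC (fun h => hyB (h ▸ hyC)))
      have hdec : ∀ p : P, ∃ b ∈ B, ∃ t : F, p = b + t • y := fun p =>
        hCm p (by rw [hCtop]; exact Submodule.mem_top)
      have hc0 : c = 0 := by
        by_contra hcne
        apply hbr_ne
        have hbry : ∀ b ∈ B, br y b = 0 := by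
          intro b hb
          have huB : br y b ∈ B := hNbr y b hb
          have a2 : ∀ w, w ∈ B → mul y (mul y w) = c • mul y w := by
            intro w hw
            have h := hassoc y y w
            have h2 : mul (mul y y) w = c • mul y w := by
              rw [hyydec, map_add, LinearMap.add_apply, map_smul, LinearMap.smul_apply,
                (hab _ hs w hw).1, add_zero]
            rw [← h, h2]
          have a1 : c • br y b = mul (br y b) y + mul (br y b) y := by
            have h := hleib y y b
            have h2 : br (mul y y) b = c • br y b := by
              rw [hyydec, map_add, LinearMap.add_apply, map_smul, LinearMap.smul_apply,
                (hab _ hs b hb).2, add_zero]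
            rw [h2] at h
            rw [h, hcomm y (br y b)]
          have e1 : mul (c • br y b) y = c • mul (br y b) y := by
            rw [map_smul, LinearMap.smul_apply]
          have e2 : mul (mul (br y b) y) y = c • mul (br y b) y := by
            rw [hcomm (mul (br y b) y) y, hcomm (br y b) y]
            exact a2 _ huB
          have h := congrArg (fun w => mul w y) a1
          rw [e1, map_add, LinearMap.add_apply, e2] at h
          have hGz : mul (br y b) y = 0 := by
            have h0 : c • mul (br y b) y = 0 := add_eq_left.mp h.symm
            exact (smul_eq_zero.mp h0).resolve_left hcne
          have h0 : c • br y b = 0 := by rw [a1, hGz, add_zero]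
          exact (smul_eq_zero.mp h0).resolve_left hcne
        apply LinearMap.ext; intro p
        apply LinearMap.ext; intro q
        simp only [LinearMap.zero_apply]
        obtain ⟨b, hb, t, rfl⟩ := hdec p
        obtain ⟨b', hb', t', rfl⟩ := hdec q
        rw [bilin_expand', (hab b hb b' hb').2, hskew y]
        have h1 : br b y = 0 := by rw [hskew' b y, hbry b hb, neg_zero]
        rw [h1, hbry b' hb']
        simp
      have hyyB : mul y y ∈ B := by
        have := hs
        rwa [hc0, zero_smul, sub_zero] at this
      intro p q
      obtain ⟨b, hb, t, rfl⟩ := hdec p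
      obtain ⟨b', hb', t', rfl⟩ := hdec q
      constructor
      · rw [bilin_expand']
        refine B.add_mem (B.add_mem (B.add_mem ?_ ?_) ?_) ?_
        · rw [(hab b hb b' hb').1]; exact B.zero_mem
        · exact B.smul_mem _ ((hN y b hb).1)
        · exact B.smul_mem _ (hNmul y b' hb')
        · exact B.smul_mem _ hyyB
      · rw [bilin_expand']
        refine B.add_mem (B.add_mem (B.add_mem ?_ ?_) ?_) ?_
        · rw [(hab b hb b' hb').2]; exact B.zero_mem
        · exact B.smul_mem _ ((hN y b hb).2)
        · exact B.smul_mem _ (hNbr y b' hb')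
        · rw [hskew y, smul_zero]; exact B.zero_mem
    · -- Case B : derive a contradiction
      exfalso
      -- the "idealizer" N
      set N : Submodule F P :=
        { carrier := {p | ∀ b ∈ B, mul b p ∈ B ∧ br b p ∈ B}
          add_mem' := by
            intro p q hp hq b hb
            exact ⟨by rw [map_add]; exact B.add_mem (hp b hb).1 (hq b hb).1,
                   by rw [map_add]; exact B.add_mem (hp b hb).2 (hq b hb).2⟩
          zero_mem' := by
            intro b hb
            exact ⟨by rw [map_zero]; exact B.zero_mem, by rw [map_zero]; exact B.zero_mem⟩
          smul_mem' := by
            intro t p hp b hb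
            exact ⟨by rw [map_smul]; exact B.smul_mem t (hp b hb).1,
                   by rw [map_smul]; exact B.smul_mem t (hp b hb).2⟩ } with hNdef
      have hmemN : ∀ p : P, p ∈ N ↔ ∀ b ∈ B, mul b p ∈ B ∧ br b p ∈ B := fun p => Iff.rfl
      have hBN : B ≤ N := by
        intro b' hb'
        rw [hmemN]
        intro b hb
        exact ⟨by rw [(hab b hb b' hb').1]; exact B.zero_mem,
               by rw [(hab b hb b' hb').2]; exact B.zero_mem⟩
      have hNsub : IsSubalg mul br N := by
        intro p hp q hq
        rw [hmemN] at hp hq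
        constructor
        · rw [hmemN]
          intro b hb
          constructor
          · rw [← hassoc b p q]
            exact (hq _ (hp b hb).1).1
          · rw [hskew' b (mul p q)]
            apply B.neg_mem
            rw [hleib p q b]
            apply B.add_mem
            · have h1 : br p b ∈ B := by
                rw [hskew' p b]; exact B.neg_mem (hp b hb).2
              exact (hq _ h1).1
            · have h1 : br q b ∈ B := by
                rw [hskew' q b]; exact B.neg_mem (hq b hb).2
              rw [hcomm p _]
              exact (hp _ h1).1
        · rw [hmemN]
          intro b hb
          constructor
          · have h := hleib b q p
            have h2 : mul b (br q p) = br (mul b q) p - mul (br b p) q := by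
              rw [h]; abel
            rw [hskew' p q, map_neg]
            apply B.neg_mem
            rw [h2]
            apply B.sub_mem
            · exact (hp _ (hq b hb).1).2
            · exact (hq _ (hp b hb).2).1
          · have h := hjac p q b
            have h2 : br (br p q) b = -(br (br q b) p + br (br b p) q) :=
              eq_neg_of_add_eq_zero_left (by rw [← add_assoc]; exact h)
            rw [hskew' b (br p q)]
            apply B.neg_mem
            rw [h2]
            apply B.neg_mem
            apply B.add_mem
            · have h1 : br q b ∈ B := by
                rw [hskew' q b]; exact B.neg_mem (hq b hb).2
              exact (hp _ h1).2
            · exact (hq _ (hp b hb).2).2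
      have hNB : N ≤ B := by
        rcases hBN.lt_or_eq with h | h
        · exfalso
          apply hN
          intro p b hb
          have hpN : p ∈ N := by rw [hmax N hNsub h]; exact Submodule.mem_top
          exact (hmemN p).mp hpN b hb
        · rw [← h]
      -- operators on the quotient
      set Lop : ↥B → Module.End F (P ⧸ B) := fun b =>
        Submodule.mapQ B B (mul (b : P)) (fun b' hb' => Submodule.mem_comap.mpr
          (by rw [(hab _ b.2 _ hb').1]; exact B.zero_mem)) with hLop
      set Rop : ↥B → Module.End F (P ⧸ B) := fun b =>
        Submodule.mapQ B B (br.flip (b : P)) (fun b' hb' => Submodule.mem_comap.mpr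
          (by show br b' (b : P) ∈ B; rw [(hab _ hb' _ b.2).2]; exact B.zero_mem)) with hRop
      have LopApp : ∀ (b : ↥B) (p : P),
          Lop b (Submodule.Quotient.mk p) = Submodule.Quotient.mk (mul (b : P) p) :=
        fun b p => rfl
      have RopApp : ∀ (b : ↥B) (p : P),
          Rop b (Submodule.Quotient.mk p) = Submodule.Quotient.mk (br p (b : P)) :=
        fun b p => rfl
      -- commutation relations upstairs
      have hLL : ∀ (b b' : ↥B) (p : P), mul (b : P) (mul (b' : P) p) = 0 := by
        intro b b' p
        rw [← hassoc, (hab _ b.2 _ b'.2).1, LinearMap.map_zero₂]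
      have hLR : ∀ (b b' : ↥B) (p : P),
          br (mul (b : P) p) (b' : P) = mul (b : P) (br p (b' : P)) := by
        intro b b' p
        rw [hleib, (hab _ b.2 _ b'.2).2, LinearMap.map_zero₂, zero_add]
      have hRR : ∀ (b b' : ↥B) (p : P),
          br (br p (b : P)) (b' : P) = br (br p (b' : P)) (b : P) := by
        intro b b' p
        have h := hjac p (b : P) (b' : P)
        rw [(hab _ b.2 _ b'.2).2, LinearMap.map_zero₂, add_zero] at h
        have h2 : br (br p (b : P)) (b' : P) = -(br (br (b' : P) p) (b : P)) :=
          eq_neg_of_add_eq_zero_left h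
        have h3 : br (-(br p (b' : P))) (b : P) = -(br (br p (b' : P)) (b : P)) := by
          rw [map_neg, LinearMap.neg_apply]
        rw [h2, hskew' (b' : P) p, h3, neg_neg]
      set S : Set (Module.End F (P ⧸ B)) := Set.range Lop ∪ Set.range Rop with hS
      have hScomm : ∀ f ∈ S, ∀ g ∈ S, ∀ v, f (g v) = g (f v) := by
        intro f hf g hg v
        obtain ⟨p, rfl⟩ := Submodule.Quotient.mk_surjective B v
        rcases hf with ⟨b, rfl⟩ | ⟨b, rfl⟩ <;> rcases hg with ⟨b', rfl⟩ | ⟨b', rfl⟩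
        · rw [LopApp, LopApp, LopApp, LopApp, hLL, hLL]
        · rw [RopApp, LopApp, LopApp, RopApp, hLR]
        · rw [LopApp, RopApp, RopApp, LopApp, hLR]
        · rw [RopApp, RopApp, RopApp, RopApp, hRR]
      haveI : Nontrivial (P ⧸ B) :=
        Submodule.Quotient.nontrivial_iff.mpr hne
      have htb : (⊤ : Submodule F (P ⧸ B)) ≠ ⊥ := by
        obtain ⟨a, ha⟩ := exists_ne (0 : P ⧸ B)
        intro h
        exact ha ((Submodule.mem_bot _).mp (h ▸ Submodule.mem_top))
      obtain ⟨vbar, -, hv0, heig⟩ := exists_common_eigenvector S hScomm ⊤ htb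
        (fun f hf w hw => Submodule.mem_top)
      obtain ⟨v, rfl⟩ := Submodule.Quotient.mk_surjective B vbar
      have hvB : v ∉ B := fun h => hv0 ((Submodule.Quotient.mk_eq_zero B).mpr h)
      -- the `mul` eigenvalues vanish
      have hLv : ∀ b : ↥B, mul (b : P) v ∈ B := by
        intro b
        obtain ⟨μ, hμ⟩ := heig (Lop b) (Or.inl ⟨b, rfl⟩)
        rw [LopApp] at hμ
        have h0 : (0 : P ⧸ B) = (μ * μ) • Submodule.Quotient.mk v := by
          calc (0 : P ⧸ B) = Submodule.Quotient.mk (mul (b : P) (mul (b : P) v)) := by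
                rw [hLL]; exact (Submodule.Quotient.mk_eq_zero B).mpr B.zero_mem |>.symm ▸ rfl
            _ = Lop b (Submodule.Quotient.mk (mul (b : P) v)) := (LopApp _ _).symm
            _ = Lop b (μ • Submodule.Quotient.mk v) := by rw [hμ]
            _ = (μ * μ) • Submodule.Quotient.mk v := by rw [map_smul, LopApp, hμ, smul_smul]
        have hμ0 : μ = 0 := by
          rcases smul_eq_zero.mp h0.symm with h | h
          · exact mul_self_eq_zero.mp h
          · exact absurd h hv0
        rw [hμ0, zero_smul] at hμ
        exact (Submodule.Quotient.mk_eq_zero B).mp hμ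
      -- the bracket eigenvalues
      have hRex : ∀ b : ↥B, ∃ μ : F,
          (Submodule.Quotient.mk (br v (b : P)) : P ⧸ B) = μ • Submodule.Quotient.mk v := by
        intro b
        obtain ⟨μ, hμ⟩ := heig (Rop b) (Or.inr ⟨b, rfl⟩)
        rw [RopApp] at hμ
        exact ⟨μ, hμ⟩
      choose lam hlam using hRex
      have hRv : ∀ b : ↥B, br v (b : P) - lam b • v ∈ B := by
        intro b
        refine (Submodule.Quotient.eq B).mp ?_
        rw [hlam b, Submodule.Quotient.mk_smul]
      have hlam0 : ∃ b₀ : ↥B, lam b₀ ≠ 0 := by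
        by_contra h
        push_neg at h
        apply hvB
        apply hNB
        rw [hmemN]
        intro b hb
        refine ⟨hLv ⟨b, hb⟩, ?_⟩
        rw [hskew' b v]
        apply B.neg_mem
        have h1 := hRv ⟨b, hb⟩
        rwa [h ⟨b, hb⟩, zero_smul, sub_zero] at h1
      obtain ⟨b₀, hb₀⟩ := hlam0
      have hs₁ : br v (b₀ : P) - lam b₀ • v ∈ B := hRv b₀
      have hbrv0 : br v (b₀ : P) = lam b₀ • v + (br v (b₀ : P) - lam b₀ • v) := by abel
      set s₁ : P := br v (b₀ : P) - lam b₀ • v with hs₁def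
      -- the square of v
      set b₁ : P := mul (b₀ : P) v with hb₁def
      have hb₁ : b₁ ∈ B := hLv b₀
      set s₂ : P := br v b₁ - lam ⟨b₁, hb₁⟩ • v with hs₂def
      have hs₂ : s₂ ∈ B := hRv ⟨b₁, hb₁⟩
      have hbrvb₁ : br v b₁ = lam ⟨b₁, hb₁⟩ • v + s₂ := by rw [hs₂def]; abel
      have hstar := hleib (b₀ : P) v v
      rw [hskew v, map_zero, add_zero] at hstar
      have heq1 : -(lam ⟨b₁, hb₁⟩ • v + s₂) = -(lam b₀ • mul v v + mul s₁ v) := by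
        calc -(lam ⟨b₁, hb₁⟩ • v + s₂) = -(br v b₁) := by rw [hbrvb₁]
          _ = br b₁ v := by rw [hskew' v b₁, neg_neg]
          _ = mul (br (b₀ : P) v) v := hstar
          _ = mul (-(br v (b₀ : P))) v := by rw [← hskew' (b₀ : P) v]
          _ = -(mul (br v (b₀ : P)) v) := by rw [map_neg, LinearMap.neg_apply]
          _ = -(mul (lam b₀ • v + s₁) v) := by rw [hs₁def, ← hbrv0]
          _ = -(lam b₀ • mul v v + mul s₁ v) := by
              rw [map_add, LinearMap.add_apply, map_smul, LinearMap.smul_apply]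
      have heq2 : lam b₀ • mul v v = lam ⟨b₁, hb₁⟩ • v + s₂ - mul s₁ v := by
        have h3 := neg_injective heq1
        rw [h3]; abel
      obtain ⟨α, sv, hsv, hvv⟩ : ∃ (α : F) (sv : P), sv ∈ B ∧ mul v v = α • v + sv := by
        refine ⟨(lam b₀)⁻¹ * lam ⟨b₁, hb₁⟩, (lam b₀)⁻¹ • (s₂ - mul s₁ v),
          B.smul_mem _ (B.sub_mem hs₂ (hLv ⟨s₁, hs₁⟩)), ?_⟩
        have h5 := congrArg (fun w => (lam b₀)⁻¹ • w) heq2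
        rw [smul_smul, inv_mul_cancel₀ hb₀, one_smul] at h5
        rw [h5, add_sub_assoc, smul_add, smul_smul]
      -- mul b v = 0 for all b ∈ B
      have hG0 : ∀ b : ↥B, mul (b : P) v = 0 := by
        intro b
        have h := hleib (b : P) v (b₀ : P)
        rw [(hab _ (hLv b) _ b₀.2).2] at h
        rw [(hab _ b.2 _ b₀.2).2, LinearMap.map_zero₂, zero_add] at h
        rw [hbrv0, map_add, map_smul, (hab _ b.2 _ hs₁).1, add_zero] at h
        exact (smul_eq_zero.mp h.symm).resolve_left hb₀
      -- mul v v = 0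
      have hvv0 : mul v v = 0 := by
        have h := hleib (b₀ : P) v v
        rw [hG0 b₀, LinearMap.map_zero₂] at h
        rw [hskew v, map_zero, add_zero] at h
        rw [hskew' (b₀ : P) v, hbrv0, neg_add, map_add, LinearMap.add_apply] at h
        rw [map_neg, LinearMap.neg_apply, map_smul, LinearMap.smul_apply] at h
        rw [map_neg, LinearMap.neg_apply, hG0 ⟨s₁, hs₁⟩, neg_zero, add_zero] at h
        have h5 : lam b₀ • mul v v = 0 := neg_eq_zero.mp h.symm
        exact (smul_eq_zero.mp h5).resolve_left hb₀
      -- the subalgebra B + Fv is everything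
      set C := B ⊔ Submodule.span F {v} with hC
      have hvC : v ∈ C := Submodule.mem_sup_right (Submodule.mem_span_singleton_self v)
      have hBleC : B ≤ C := le_sup_left
      have hCm : ∀ p ∈ C, ∃ b ∈ B, ∃ t : F, p = b + t • v := by
        intro p hp
        obtain ⟨b, hb, z, hz, rfl⟩ := Submodule.mem_sup.mp hp
        obtain ⟨t, rfl⟩ := Submodule.mem_span_singleton.mp hz
        exact ⟨b, hb, t, rfl⟩
      have hCsub : IsSubalg mul br C := by
        intro p hp q hq
        obtain ⟨b, hb, t, rfl⟩ := hCm p hp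
        obtain ⟨b', hb', t', rfl⟩ := hCm q hq
        constructor
        · rw [bilin_expand']
          refine C.add_mem (C.add_mem (C.add_mem ?_ ?_) ?_) ?_
          · rw [(hab b hb b' hb').1]; exact C.zero_mem
          · exact C.smul_mem _ (hBleC (hLv ⟨b, hb⟩))
          · rw [hcomm v b']; exact C.smul_mem _ (hBleC (hLv ⟨b', hb'⟩))
          · rw [hvv]
            exact C.smul_mem _ (C.add_mem (C.smul_mem _ hvC) (hBleC hsv))
        · rw [bilin_expand']
          refine C.add_mem (C.add_mem (C.add_mem ?_ ?_) ?_) ?_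
          · rw [(hab b hb b' hb').2]; exact C.zero_mem
          · apply C.smul_mem
            rw [hskew' b v]
            apply C.neg_mem
            rw [show br v b = lam ⟨b, hb⟩ • v + (br v b - lam ⟨b, hb⟩ • v) by abel]
            exact C.add_mem (C.smul_mem _ hvC) (hBleC (hRv ⟨b, hb⟩))
          · apply C.smul_mem
            rw [show br v b' = lam ⟨b', hb'⟩ • v + (br v b' - lam ⟨b', hb'⟩ • v) by abel]
            exact C.add_mem (C.smul_mem _ hvC) (hBleC (hRv ⟨b', hb'⟩))
          · rw [hskew v, smul_zero]; exact C.zero_mem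
      have hCtop : C = ⊤ := hmax C hCsub (lt_of_le_of_ne hBleC (fun h => hvB (h ▸ hvC)))
      have hdec : ∀ p : P, ∃ b ∈ B, ∃ t : F, p = b + t • v := fun p =>
        hCm p (by rw [hCtop]; exact Submodule.mem_top)
      -- mul vanishes identically : contradiction
      apply hmul_ne
      apply LinearMap.ext; intro p
      apply LinearMap.ext; intro q
      simp only [LinearMap.zero_apply]
      obtain ⟨b, hb, t, rfl⟩ := hdec p
      obtain ⟨b', hb', t', rfl⟩ := hdec q
      rw [bilin_expand', (hab b hb b' hb').1, hG0 ⟨b, hb⟩, hcomm v b', hG0 ⟨b', hb'⟩, hvv0]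
      simp
  have hD1 : derSeries mul br 1 ≤ B := by
    show prodSpan mul (derSeries mul br 0) (derSeries mul br 0) ⊔
      prodSpan br (derSeries mul br 0) (derSeries mul br 0) ≤ B
    apply sup_le
    · refine Submodule.span_le.mpr ?_
      rintro z ⟨a, -, b, -, rfl⟩
      exact (hPB a b).1
    · refine Submodule.span_le.mpr ?_
      rintro z ⟨a, -, b, -, rfl⟩
      exact (hPB a b).2
  have hD2 : derSeries mul br 2 = ⊥ := by
    rw [eq_bot_iff]
    show prodSpan mul (derSeries mul br 1) (derSeries mul br 1) ⊔
      prodSpan br (derSeries mul br 1) (derSeries mul br 1) ≤ ⊥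
    apply sup_le
    · refine Submodule.span_le.mpr ?_
      rintro z ⟨a, ha, b, hb, rfl⟩
      simp only [SetLike.mem_coe, Submodule.mem_bot]
      exact (hab a (hD1 ha) b (hD1 hb)).1
    · refine Submodule.span_le.mpr ?_
      rintro z ⟨a, ha, b, hb, rfl⟩
      simp only [SetLike.mem_coe, Submodule.mem_bot]
      exact (hab a (hD1 ha) b (hD1 hb)).2
  exact ⟨hD1, ⟨2, hD2⟩, hD2⟩
end

section
/- Let A be a finite-dimensional associative commutative algebra. Then every abelian subalgebra of maximal dimension is an abelian ideal; in particular α(A) = β(A), where α is the maximal dimension of a subalgebra S with SS=0 and β is the maximal dimension of an ideal I with II=0. -/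
variable {F : Type*} [Field F] {A : Type*} [AddCommGroup A] [Module F A]

/-- In a finite-dimensional associative commutative algebra, every abelian
subalgebra of maximal dimension is an abelian ideal; in particular `α = β`. -/
theorem assocComm_abelian_max_isIdeal [FiniteDimensional F A]
    (mul : A →ₗ[F] A →ₗ[F] A)
    (hcomm : ∀ x y, mul x y = mul y x)
    (hassoc : ∀ x y z, mul (mul x y) z = mul x (mul y z))
    (S : Submodule F A)
    (habS : ∀ x ∈ S, ∀ y ∈ S, mul x y = 0)
    (hmax : ∀ T : Submodule F A, (∀ x ∈ T, ∀ y ∈ T, mul x y = 0) →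
      Module.finrank F T ≤ Module.finrank F S) :
    (∀ a ∈ S, ∀ y : A, mul a y ∈ S ∧ mul y a ∈ S) ∧
    ∃ I : Submodule F A, (∀ a ∈ I, ∀ y : A, mul a y ∈ I ∧ mul y a ∈ I) ∧
      (∀ x ∈ I, ∀ y ∈ I, mul x y = 0) ∧
      Module.finrank F I = Module.finrank F S := by
  have key : ∀ a ∈ S, ∀ y : A, mul a y ∈ S := by
    intro a ha y
    set b := mul a y with hb
    -- multiplication of elements of S with b is 0
    have hsb : ∀ s ∈ S, mul s b = 0 := by
      intro s hs
      rw [hb, ← hassoc, habS s hs a ha, map_zero, LinearMap.zero_apply]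
    have hbb : mul b b = 0 := by
      have h1 : mul y b = mul b y := hcomm y b
      calc mul b b = mul a (mul y b) := by rw [hb, hassoc]
        _ = mul a (mul b y) := by rw [h1]
        _ = mul a (mul a (mul y y)) := by rw [hb, hassoc]
        _ = mul (mul a a) (mul y y) := (hassoc a a (mul y y)).symm
        _ = 0 := by rw [habS a ha a ha, map_zero, LinearMap.zero_apply]
    -- T = S ⊔ span {b} is abelian
    set T := S ⊔ Submodule.span F {b} with hT
    have habT : ∀ x ∈ T, ∀ y ∈ T, mul x y = 0 := by
      intro x hx z hz
      rcases Submodule.mem_sup.mp hx with ⟨s, hs, t, ht, rfl⟩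
      rcases Submodule.mem_sup.mp hz with ⟨s', hs', t', ht', rfl⟩
      rcases Submodule.mem_span_singleton.mp ht with ⟨c, rfl⟩
      rcases Submodule.mem_span_singleton.mp ht' with ⟨c', rfl⟩
      simp only [map_add, map_smul, LinearMap.add_apply, LinearMap.smul_apply]
      have h2 : mul b s' = 0 := by rw [hcomm]; exact hsb s' hs'
      rw [habS s hs s' hs', hsb s hs, h2, hbb]
      simp
    have hle : S ≤ T := le_sup_left
    have heq : S = T :=
      Submodule.eq_of_le_of_finrank_le hle (hmax T habT)
    have hbT : b ∈ T := Submodule.mem_sup_right (Submodule.mem_span_singleton_self b)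
    rw [heq]; exact hbT
  refine ⟨fun a ha y => ⟨key a ha y, by rw [hcomm]; exact key a ha y⟩,
    S, fun a ha y => ⟨key a ha y, by rw [hcomm]; exact key a ha y⟩, habS, rfl⟩
end

section
/- Let P be a Poisson algebra of dimension n over an arbitrary field. If P has an abelian subalgebra of dimension n−1, then P has an abelian ideal of dimension n−1. -/
variable {F : Type*} [Field F] {P : Type*} [AddCommGroup P] [Module F P]

/-- If a Poisson algebra of dimension `n` has an abelian subalgebra of
dimension `n - 1`, then it has an abelian ideal of dimension `n - 1`. -/
theorem abelian_codim_one_gives_abelian_ideal [FiniteDimensional F P]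
    (mul br : P →ₗ[F] P →ₗ[F] P)
    (hcomm : ∀ x y, mul x y = mul y x)
    (hassoc : ∀ x y z, mul (mul x y) z = mul x (mul y z))
    (hskew : ∀ x, br x x = 0)
    (hjac : ∀ x y z, br (br x y) z + br (br y z) x + br (br z x) y = 0)
    (hleib : ∀ x y z, br (mul x y) z = mul (br x z) y + mul x (br y z))
    (A : Submodule F P) (hab : IsAbelian mul br A)
    (hdim : Module.finrank F A + 1 = Module.finrank F P) :
    ∃ I : Submodule F P, IsAbelian mul br I ∧ IsIdeal mul br I ∧
      Module.finrank F I + 1 = Module.finrank F P := by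
  classical
  -- skew symmetry
  have hskew2 : ∀ x y, br x y = - br y x := by
    intro x y
    have h0 := hskew (x + y)
    simp only [map_add, LinearMap.add_apply, hskew, zero_add, add_zero] at h0
    rw [add_comm] at h0
    exact eq_neg_of_add_eq_zero_left h0
  -- pick e outside A
  have hAne : A ≠ ⊤ := by
    intro h
    rw [h, finrank_top] at hdim
    omega
  obtain ⟨e, he⟩ : ∃ e, e ∉ A := by
    by_contra h
    push_neg at h
    exact hAne (Submodule.eq_top_iff'.mpr h)
  have he0 : e ≠ 0 := fun h => he (h ▸ A.zero_mem)
  -- A and span e are complementary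
  have hsup : A ⊔ (F ∙ e) = ⊤ := by
    have hlt : A < A ⊔ (F ∙ e) := by
      refine lt_of_le_of_ne le_sup_left fun h => he ?_
      rw [h]
      exact Submodule.mem_sup_right (Submodule.mem_span_singleton_self e)
    apply Submodule.eq_top_of_finrank_eq
    have h1 := Submodule.finrank_lt_finrank_of_lt hlt
    have h2 := Submodule.finrank_le (A ⊔ (F ∙ e))
    omega
  have hdisj : Disjoint A (F ∙ e) := by
    rw [Submodule.disjoint_def]
    intro x hxA hxS
    obtain ⟨t, rfl⟩ := Submodule.mem_span_singleton.mp hxS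
    by_cases ht : t = 0
    · simp [ht]
    · exact absurd (by simpa [smul_smul, inv_mul_cancel₀ ht] using A.smul_mem t⁻¹ hxA) he
  have hcompl : IsCompl A (F ∙ e) := ⟨hdisj, codisjoint_iff.mpr hsup⟩
  -- the coordinate functional π
  obtain ⟨π, hπe, hπA, hdec⟩ :
      ∃ π : P →ₗ[F] F, π e = 1 ∧ (∀ a ∈ A, π a = 0) ∧ ∀ v : P, v - π v • e ∈ A := by
    refine ⟨(LinearEquiv.coord F P e he0).toLinearMap ∘ₗ
      Submodule.linearProjOfIsCompl (F ∙ e) A hcompl.symm, ?_, ?_, ?_⟩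
    · have h1 : Submodule.linearProjOfIsCompl (F ∙ e) A hcompl.symm e
          = ⟨e, Submodule.mem_span_singleton_self e⟩ :=
        Submodule.linearProjOfIsCompl_apply_left hcompl.symm
          ⟨e, Submodule.mem_span_singleton_self e⟩
      simp only [LinearMap.coe_comp, Function.comp_apply, LinearEquiv.coe_coe, h1]
      exact LinearEquiv.coord_self F P e he0
    · intro a ha
      have h1 : Submodule.linearProjOfIsCompl (F ∙ e) A hcompl.symm a = 0 :=
        Submodule.projectionOnto_apply_of_mem_right hcompl.symm ha
      simp [h1]
    · intro v
      have hsm : ∀ v : P,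
          ((LinearEquiv.coord F P e he0).toLinearMap ∘ₗ
            Submodule.linearProjOfIsCompl (F ∙ e) A hcompl.symm) v • e
          = (Submodule.linearProjOfIsCompl (F ∙ e) A hcompl.symm v : P) := fun v =>
        LinearEquiv.coord_apply_smul F P e he0 _
      rw [hsm]
      have h : (A.linearProjOfIsCompl (F ∙ e) hcompl v : P)
          + (Submodule.linearProjOfIsCompl (F ∙ e) A hcompl.symm v : P) = v :=
        Submodule.projection_add_projection_eq_self hcompl v
      have h2 : v - (Submodule.linearProjOfIsCompl (F ∙ e) A hcompl.symm v : P)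
          = (A.linearProjOfIsCompl (F ∙ e) hcompl v : P) := sub_eq_of_eq_add h.symm
      rw [h2]
      exact (A.linearProjOfIsCompl (F ∙ e) hcompl v).2
  -- products with e land in A (multiplicatively)
  have hmulA : ∀ a ∈ A, mul e a ∈ A := by
    intro a ha
    have hdm : mul e a - π (mul e a) • e ∈ A := hdec _
    have h1 : mul a (mul e a) = 0 := by
      rw [hcomm e a, ← hassoc, (hab a ha a ha).1, map_zero, LinearMap.zero_apply]
    have h2 : mul a (mul e a) = π (mul e a) • mul e a := by
      have h3 : mul a (mul e a)
          = mul a (mul e a - π (mul e a) • e) + π (mul e a) • mul a e := by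
        simp only [map_sub, map_smul, LinearMap.sub_apply, LinearMap.smul_apply]; abel
      rw [h3, (hab a ha _ hdm).1, zero_add, hcomm]
    have h4 : π (mul e a) • mul e a = 0 := h2.symm.trans h1
    have h5 : π (mul e a) * π (mul e a) = 0 := by
      have := congrArg π h4
      simpa [map_smul, smul_eq_mul] using this
    have h6 : π (mul e a) = 0 := by
      rcases mul_eq_zero.mp h5 with h | h <;> exact h
    have := hdec (mul e a)
    rwa [h6, zero_smul, sub_zero] at this
  by_cases H : ∀ a ∈ A, br e a ∈ A
  · -- A itself is the required ideal
    refine ⟨A, hab, ?_, hdim⟩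
    intro x hx y
    obtain ⟨b, hb, hy⟩ : ∃ b ∈ A, y = b + π y • e := ⟨y - π y • e, hdec y, by abel⟩
    have e1 : mul x y = mul x b + π y • mul x e := by
      conv_lhs => rw [hy]
      rw [map_add, map_smul]
    have hmxe : mul x e ∈ A := by rw [hcomm]; exact hmulA x hx
    have hmul_mem : mul x y ∈ A := by
      rw [e1, (hab x hx b hb).1, zero_add]
      exact A.smul_mem _ hmxe
    have e2 : br x y = br x b + π y • br x e := by
      conv_lhs => rw [hy]
      rw [map_add, map_smul]
    have hbxe : br x e ∈ A := by
      rw [hskew2 x e]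
      exact A.neg_mem (H x hx)
    have hbr_mem : br x y ∈ A := by
      rw [e2, (hab x hx b hb).2, zero_add]
      exact A.smul_mem _ hbxe
    exact ⟨hmul_mem, by rw [hcomm]; exact hmul_mem, hbr_mem,
      by rw [hskew2 y x]; exact A.neg_mem hbr_mem⟩
  · push_neg at H
    obtain ⟨a0, ha0A, ha0⟩ := H
    have hf0 : π (br e a0) ≠ 0 := by
      intro h
      apply ha0
      have := hdec (br e a0)
      rwa [h, zero_smul, sub_zero] at this
    obtain ⟨a1, w, ha1A, hwdef, hπw⟩ :
        ∃ (a1 w : P), a1 ∈ A ∧ br e a1 = w ∧ π w = 1 := by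
      refine ⟨(π (br e a0))⁻¹ • a0, _, A.smul_mem _ ha0A, rfl, ?_⟩
      rw [map_smul, map_smul, smul_eq_mul, inv_mul_cancel₀ hf0]
    obtain ⟨u, hu, hudef⟩ : ∃ u ∈ A, w = e + u := by
      refine ⟨w - e, ?_, by abel⟩
      have := hdec w
      rwa [hπw, one_smul] at this
    have hw0 : w ≠ 0 := by
      intro h
      rw [h, map_zero] at hπw
      exact one_ne_zero hπw.symm
    -- key bracket relation : br w b = π (br e b) • w for b ∈ A
    have hbrw : ∀ b ∈ A, br w b = π (br e b) • w := by
      intro b hb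
      have hj := hjac a1 b e
      have h1 : br a1 b = 0 := (hab a1 ha1A b hb).2
      obtain ⟨g, hg, hbe⟩ : ∃ g ∈ A, br e b = π (br e b) • e + g :=
        ⟨br e b - π (br e b) • e, hdec _, by abel⟩
      have h2 : br (br e b) a1 = π (br e b) • w := by
        conv_lhs => rw [hbe]
        rw [map_add, LinearMap.add_apply, map_smul, LinearMap.smul_apply,
          (hab g hg a1 ha1A).2, add_zero, hwdef]
      have h3 : br (br b e) a1 = -(π (br e b) • w) := by
        rw [hskew2 b e, map_neg, LinearMap.neg_apply, h2]
      rw [h1, map_zero, LinearMap.zero_apply, h3, hwdef, zero_add] at hj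
      have h5 : br w b - π (br e b) • w = 0 := by
        rw [← hj]; abel
      exact sub_eq_zero.mp h5
    -- multiplication vanishes entirely
    have hmulw : ∀ a ∈ A, mul w a = 0 := by
      intro a ha
      have hl := hleib e a a1
      have h1 : br (mul e a) a1 = 0 := (hab _ (hmulA a ha) a1 ha1A).2
      have h2 : br a a1 = 0 := (hab a ha a1 ha1A).2
      rw [h1, h2, map_zero, add_zero, hwdef] at hl
      exact hl.symm
    have hmulA0 : ∀ a ∈ A, mul e a = 0 := by
      intro a ha
      have h := hmulw a ha
      rwa [hudef, map_add, LinearMap.add_apply, (hab u hu a ha).1, add_zero] at h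
    have hmulee : mul e e = 0 := by
      have hl := hleib e a1 e
      rw [hmulA0 a1 ha1A, map_zero, LinearMap.zero_apply, hskew e, map_zero,
        LinearMap.zero_apply, zero_add, hskew2 a1 e, hwdef, map_neg] at hl
      have h2 : mul e w = 0 := by
        have := hl.symm
        rwa [neg_eq_zero] at this
      rwa [hudef, map_add, hmulA0 u hu, add_zero] at h2
    have hmulE : ∀ v, mul e v = 0 := by
      intro v
      have h : mul e v = mul e (v - π v • e) + π v • mul e e := by
        simp only [map_sub, map_smul, LinearMap.sub_apply, LinearMap.smul_apply]; abel
      rw [h, hmulA0 _ (hdec v), hmulee, smul_zero, add_zero]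
    have hmul0 : ∀ x y, mul x y = 0 := by
      intro x y
      have ha : x - π x • e ∈ A := hdec x
      have hb : y - π y • e ∈ A := hdec y
      have hx : mul (x - π x • e) y = 0 := by
        have h2 : mul (x - π x • e) y
            = mul (x - π x • e) (y - π y • e) + π y • mul (x - π x • e) e := by
          simp only [map_sub, map_smul, LinearMap.sub_apply, LinearMap.smul_apply]; abel
        rw [h2, (hab _ ha _ hb).1, zero_add, hcomm (x - π x • e) e, hmulE, smul_zero]
      have h : mul x y = mul (x - π x • e) y + π x • mul e y := by
        simp only [map_sub, map_smul, LinearMap.sub_apply, LinearMap.smul_apply]; abel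
      rw [h, hx, hmulE, smul_zero, zero_add]
    -- further bracket facts
    have hbrek : ∀ k ∈ A, π (br e k) = 0 → br e k = 0 := by
      intro k hk hπk
      have h := hbrw k hk
      rw [hπk, zero_smul] at h
      rwa [hudef, map_add, LinearMap.add_apply, (hab u hu k hk).2, add_zero] at h
    have hbeu : br e u = π (br e u) • w := by
      have h : br e u = br w u := by
        rw [hudef, map_add, LinearMap.add_apply, hskew u, add_zero]
      exact h.trans (hbrw u hu)
    have hbrew : br e w ∈ F ∙ w := by
      have h : br e w = π (br e u) • w := by
        conv_lhs => rw [hudef]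
        rw [map_add, hskew e, zero_add]
        exact hbeu
      rw [h]
      exact Submodule.smul_mem _ _ (Submodule.mem_span_singleton_self w)
    -- define the ideal
    set θ : P →ₗ[F] F := π ∘ₗ br e with hθdef
    set K : Submodule F P := A ⊓ LinearMap.ker θ with hKdef
    set I : Submodule F P := K ⊔ (F ∙ w) with hIdef
    have hKA : ∀ k ∈ K, k ∈ A := fun k hk => hk.1
    have hKθ : ∀ k ∈ K, π (br e k) = 0 := fun k hk => hk.2
    have hwI : w ∈ I := Submodule.mem_sup_right (Submodule.mem_span_singleton_self w)
    have hbrwk : ∀ k ∈ K, br w k = 0 := by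
      intro k hk
      rw [hbrw k (hKA k hk), hKθ k hk, zero_smul]
    have hImem : ∀ x ∈ I, ∃ k ∈ K, ∃ t : F, x = k + t • w := by
      intro x hx
      rw [hIdef] at hx
      obtain ⟨k, hk, z, hz, hkz⟩ := Submodule.mem_sup.mp hx
      obtain ⟨t, ht⟩ := Submodule.mem_span_singleton.mp hz
      exact ⟨k, hk, t, by rw [← hkz, ← ht]⟩
    -- I is abelian
    have habI : IsAbelian mul br I := by
      intro x hx y hy
      obtain ⟨k, hk, s, rfl⟩ := hImem x hx
      obtain ⟨k', hk', t, rfl⟩ := hImem y hy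
      refine ⟨hmul0 _ _, ?_⟩
      simp only [map_add, map_smul, LinearMap.add_apply, LinearMap.smul_apply,
        (hab k (hKA k hk) k' (hKA k' hk')).2, hbrwk k' hk', hskew w, hskew2 k w,
        hbrwk k hk, smul_zero, neg_zero, add_zero, zero_add]
    -- I is an ideal
    have hidI : IsIdeal mul br I := by
      intro x hx y
      obtain ⟨k, hk, s, rfl⟩ := hImem x hx
      obtain ⟨b, hb, hy⟩ : ∃ b ∈ A, y = b + π y • e := ⟨y - π y • e, hdec y, by abel⟩
      have hbrk : br k y = 0 := by
        have h : br k y = br k b + π y • br k e := by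
          conv_lhs => rw [hy]
          rw [map_add, map_smul]
        rw [h, (hab k (hKA k hk) b hb).2, zero_add, hskew2 k e,
          hbrek k (hKA k hk) (hKθ k hk)]
        simp
      have hbrwy : br w y ∈ I := by
        have h : br w y = br w b + π y • br w e := by
          conv_lhs => rw [hy]
          rw [map_add, map_smul]
        rw [h]
        apply I.add_mem
        · rw [hbrw b hb]
          exact I.smul_mem _ hwI
        · apply I.smul_mem
          rw [hskew2 w e]
          exact I.neg_mem (Submodule.mem_sup_right hbrew)
      have hmain : br (k + s • w) y ∈ I := by
        rw [map_add, LinearMap.add_apply, map_smul, LinearMap.smul_apply, hbrk, zero_add]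
        exact I.smul_mem _ hbrwy
      exact ⟨by rw [hmul0]; exact I.zero_mem, by rw [hmul0]; exact I.zero_mem,
        hmain, by rw [hskew2 y]; exact I.neg_mem hmain⟩
    -- dimension count
    have hθA : Function.Surjective (θ ∘ₗ A.subtype) := by
      intro c
      refine ⟨c • ⟨a1, ha1A⟩, ?_⟩
      rw [map_smul]
      have h1 : (θ ∘ₗ A.subtype) ⟨a1, ha1A⟩ = 1 := by
        show π (br e a1) = 1
        rw [hwdef]; exact hπw
      rw [h1, smul_eq_mul, mul_one]
    have hrk1 : Module.finrank F (LinearMap.ker (θ ∘ₗ A.subtype)) + 1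
        = Module.finrank F A := by
      have h := LinearMap.finrank_range_add_finrank_ker (θ ∘ₗ A.subtype)
      rw [LinearMap.range_eq_top.mpr hθA, finrank_top, Module.finrank_self] at h
      omega
    have hKmap : K = Submodule.map A.subtype (LinearMap.ker (θ ∘ₗ A.subtype)) := by
      rw [LinearMap.ker_comp, Submodule.map_comap_subtype]
    have hKrank : Module.finrank F K + 1 = Module.finrank F A := by
      rw [hKmap, Submodule.finrank_map_subtype_eq]
      exact hrk1
    have hdisjKw : K ⊓ (F ∙ w) = ⊥ := by
      rw [Submodule.eq_bot_iff]
      intro x hx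
      obtain ⟨hxK, hxS⟩ := Submodule.mem_inf.mp hx
      obtain ⟨t, rfl⟩ := Submodule.mem_span_singleton.mp hxS
      have h1 : π (t • w) = 0 := hπA _ (hKA _ hxK)
      rw [map_smul, hπw, smul_eq_mul, mul_one] at h1
      rw [h1, zero_smul]
    have hIrank : Module.finrank F I + 1 = Module.finrank F P := by
      have h := Submodule.finrank_sup_add_finrank_inf_eq K (F ∙ w)
      rw [hdisjKw, finrank_bot, finrank_span_singleton hw0, ← hIdef] at h
      omega
    exact ⟨I, habI, hidI, hIrank⟩
end

section
/- Let P be a non-trivial Poisson algebra of dimension n over an arbitrary field (i.e., both the commutative product and the bracket are nonzero). Then every abelian subalgebra of codimension one in P is an abelian ideal of P. -/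
variable {F : Type*} [Field F] {P : Type*} [AddCommGroup P] [Module F P]

/-- In a non-trivial Poisson algebra, every abelian subalgebra of codimension
one is an abelian ideal. -/
theorem abelian_codim_one_isIdeal [FiniteDimensional F P]
    (mul br : P →ₗ[F] P →ₗ[F] P)
    (hmul_ne : mul ≠ 0) (hbr_ne : br ≠ 0)
    (hcomm : ∀ x y, mul x y = mul y x)
    (hassoc : ∀ x y z, mul (mul x y) z = mul x (mul y z))
    (hskew : ∀ x, br x x = 0)
    (hjac : ∀ x y z, br (br x y) z + br (br y z) x + br (br z x) y = 0)
    (hleib : ∀ x y z, br (mul x y) z = mul (br x z) y + mul x (br y z))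
    (A : Submodule F P) (hab : IsAbelian mul br A)
    (hdim : Module.finrank F A + 1 = Module.finrank F P) :
    IsIdeal mul br A := by
  classical
  -- antisymmetry of the bracket
  have hanti : ∀ x y : P, br y x = - br x y := by
    intro x y
    have h2 := hskew (x + y)
    simp only [map_add, LinearMap.add_apply, hskew x, hskew y, zero_add, add_zero] at h2
    exact eq_neg_of_add_eq_zero_left h2
  -- pick e ∉ A
  have hAne : A ≠ ⊤ := by
    intro h
    rw [h, finrank_top] at hdim
    omega
  have hex : ¬ ∀ x : P, x ∈ A := fun h => hAne (Submodule.eq_top_iff'.mpr h)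
  push_neg at hex
  obtain ⟨e, he⟩ := hex
  have he0 : e ≠ 0 := fun h => he (h ▸ A.zero_mem)
  have hsup : A ⊔ (F ∙ e) = ⊤ := by
    apply Submodule.eq_top_of_finrank_eq
    have h1 : A < A ⊔ (F ∙ e) := by
      refine lt_of_le_of_ne le_sup_left ?_
      intro h
      apply he
      rw [h]
      exact Submodule.mem_sup_right (Submodule.mem_span_singleton_self e)
    have h2 : Module.finrank F ↥(A ⊔ (F ∙ e)) ≤ Module.finrank F A + 1 := by
      have h3 := Submodule.finrank_sup_add_finrank_inf_eq A (F ∙ e)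
      have h4 : Module.finrank F ↥(F ∙ e) = 1 := finrank_span_singleton he0
      omega
    have h5 := Submodule.finrank_lt_finrank_of_lt h1
    omega
  -- decomposition
  have hdecomp : ∀ v : P, ∃ c : F, ∃ a ∈ A, v = c • e + a := by
    intro v
    have hv : v ∈ A ⊔ (F ∙ e) := hsup ▸ Submodule.mem_top
    obtain ⟨a, ha, b, hb, hab'⟩ := Submodule.mem_sup.mp hv
    obtain ⟨c, rfl⟩ := Submodule.mem_span_singleton.mp hb
    exact ⟨c, a, ha, by rw [← hab']; abel⟩
  -- uniqueness of the scalar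
  have huniq : ∀ c : F, ∀ a ∈ A, c • e + a = 0 → c = 0 := by
    intro c a ha h
    by_contra hc
    apply he
    have h1 : c • e = -a := eq_neg_of_add_eq_zero_left h
    have h2 : e = c⁻¹ • (-a) := by
      rw [← h1, smul_smul, inv_mul_cancel₀ hc, one_smul]
    rw [h2]
    exact A.smul_mem _ (A.neg_mem ha)
  -- Step A : mul x e ∈ A for x ∈ A
  have hmulA : ∀ x ∈ A, mul x e ∈ A := by
    intro x hx
    obtain ⟨c, a, ha, hxe⟩ := hdecomp (mul x e)
    have h1 : (0 : P) = mul x (mul x e) := by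
      rw [← hassoc, (hab x hx x hx).1, map_zero, LinearMap.zero_apply]
    have h2 : mul x (mul x e) = (c * c) • e + c • a := by
      rw [hxe, map_add, map_smul, hxe, (hab x hx a ha).1, smul_add, smul_smul, add_zero]
    have h3 : (c * c) • e + c • a = 0 := by rw [← h2, ← h1]
    have hc : c = 0 := mul_self_eq_zero.mp (huniq _ _ (A.smul_mem c ha) h3)
    rw [hxe, hc, zero_smul, zero_add]
    exact ha
  -- Step B : br x e ∈ A for x ∈ A
  have hbrA : ∀ x ∈ A, br x e ∈ A := by
    by_contra hcon
    push_neg at hcon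
    obtain ⟨a, ha, hae⟩ := hcon
    obtain ⟨c, g, hg, hbrae⟩ := hdecomp (br a e)
    have hc : c ≠ 0 := by
      intro h
      apply hae
      rw [hbrae, h, zero_smul, zero_add]
      exact hg
    -- (i) mul b e = 0 for all b ∈ A
    have hmul0 : ∀ b ∈ A, mul b e = 0 := by
      intro b hb
      have h1 := hleib b e a
      rw [(hab _ (hmulA b hb) a ha).2, (hab b hb a ha).2, map_zero, LinearMap.zero_apply,
        hanti a e, hbrae] at h1
      -- h1 : 0 = 0 + mul b (-(c • e + g))
      rw [map_neg, map_add, map_smul, (hab b hb g hg).1, add_zero, zero_add] at h1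
      have h2 : c • mul b e = 0 := by
        have := h1.symm
        rwa [neg_eq_zero] at this
      exact (smul_eq_zero.mp h2).resolve_left hc
    -- (ii) mul e e = 0
    have hee : mul e e = 0 := by
      have h1 := hleib a e e
      rw [hmul0 a ha, map_zero, LinearMap.zero_apply, hskew e, map_zero, add_zero,
        hbrae, map_add, LinearMap.add_apply, map_smul, LinearMap.smul_apply,
        hmul0 g hg, add_zero] at h1
      exact (smul_eq_zero.mp h1.symm).resolve_left hc
    -- (iii) mul = 0, contradiction
    apply hmul_ne
    refine LinearMap.ext fun x => LinearMap.ext fun y => ?_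
    obtain ⟨cx, ax, hax, rfl⟩ := hdecomp x
    obtain ⟨cy, ay, hay, rfl⟩ := hdecomp y
    simp only [map_add, map_smul, LinearMap.add_apply, LinearMap.smul_apply,
      LinearMap.zero_apply, hee, smul_zero, hcomm e ay, hmul0 ay hay, hmul0 ax hax,
      (hab ax hax ay hay).1, add_zero, zero_add]
  -- conclude
  intro x hx y
  obtain ⟨c, a, ha, rfl⟩ := hdecomp y
  have hxy : mul x (c • e + a) ∈ A := by
    rw [map_add, map_smul, (hab x hx a ha).1, add_zero]
    exact A.smul_mem c (hmulA x hx)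
  have hbxy : br x (c • e + a) ∈ A := by
    rw [map_add, map_smul, (hab x hx a ha).2, add_zero]
    exact A.smul_mem c (hbrA x hx)
  refine ⟨hxy, ?_, hbxy, ?_⟩
  · rw [hcomm]; exact hxy
  · rw [hanti x (c • e + a)]; exact A.neg_mem hbxy
end

section
/- Let P be a Poisson algebra of dimension n over an arbitrary field, and let A be an abelian subalgebra of codimension two in P. Then A is a maximal subalgebra of P if and only if A is a maximal subalgebra of the Lie algebra P_L (P with only the bracket). -/
variable {F : Type*} [Field F] {P : Type*} [AddCommGroup P] [Module F P]

/-- A subalgebra of the underlying Lie algebra (closed under the bracket only). -/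
def IsSubalgL (br : P →ₗ[F] P →ₗ[F] P) (A : Submodule F P) : Prop :=
  ∀ x ∈ A, ∀ y ∈ A, br x y ∈ A

private lemma aux_finrank_sup [FiniteDimensional F P] (S : Submodule F P) {x : P} (hx : x ∉ S) :
    Module.finrank F ↥(S ⊔ Submodule.span F {x}) = Module.finrank F S + 1 := by
  have hx0 : x ≠ 0 := fun h => hx (h ▸ S.zero_mem)
  have hinf : S ⊓ Submodule.span F {x} = ⊥ := by
    rw [eq_bot_iff]
    intro y hy
    rw [Submodule.mem_inf] at hy
    obtain ⟨hyS, hyx⟩ := hy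
    obtain ⟨c, rfl⟩ := Submodule.mem_span_singleton.mp hyx
    rcases eq_or_ne c 0 with rfl | hc
    · simp
    · exact absurd ((S.smul_mem_iff hc).mp hyS) hx
  have h := Submodule.finrank_sup_add_finrank_inf_eq S (Submodule.span F {x})
  rw [hinf, finrank_span_singleton hx0] at h
  simpa using h

/-- If `A` is abelian and the span of `A` and `x` is closed, it is a subalgebra. -/
private lemma subalg_gen
    (mul br : P →ₗ[F] P →ₗ[F] P)
    (hcomm : ∀ x y, mul x y = mul y x)
    (hskew : ∀ x, br x x = 0)
    (A : Submodule F P) (hab : IsAbelian mul br A)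
    (x : P)
    (hma : ∀ a ∈ A, mul x a ∈ A ⊔ Submodule.span F {x})
    (hba : ∀ a ∈ A, br x a ∈ A ⊔ Submodule.span F {x})
    (hxx : mul x x ∈ A ⊔ Submodule.span F {x}) :
    IsSubalg mul br (A ⊔ Submodule.span F {x}) := by
  have hanti : ∀ y z : P, br y z = - br z y := by
    intro y z
    have h := hskew (y + z)
    simp only [map_add, LinearMap.add_apply, hskew y, hskew z, zero_add, add_zero] at h
    rw [add_comm] at h
    exact eq_neg_of_add_eq_zero_left h
  intro y hy z hz
  obtain ⟨a, ha, s, hs, rfl⟩ := Submodule.mem_sup.mp hy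
  obtain ⟨l, rfl⟩ := Submodule.mem_span_singleton.mp hs
  obtain ⟨a', ha', s', hs', rfl⟩ := Submodule.mem_sup.mp hz
  obtain ⟨m, rfl⟩ := Submodule.mem_span_singleton.mp hs'
  have hax : mul a x ∈ A ⊔ Submodule.span F {x} := by rw [hcomm a x]; exact hma a ha
  have hbax : br a x ∈ A ⊔ Submodule.span F {x} := by
    rw [hanti a x]; exact neg_mem (hba a ha)
  constructor
  · have expand : mul (a + l • x) (a' + m • x)
        = mul a a' + m • mul a x + l • mul x a' + (l * m) • mul x x := by
      simp only [map_add, map_smul, LinearMap.add_apply, LinearMap.smul_apply]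
      module
    rw [expand]
    refine add_mem (add_mem (add_mem ?_ ?_) ?_) ?_
    · rw [(hab a ha a' ha').1]; exact Submodule.zero_mem _
    · exact Submodule.smul_mem _ _ hax
    · exact Submodule.smul_mem _ _ (hma a' ha')
    · exact Submodule.smul_mem _ _ hxx
  · have expand : br (a + l • x) (a' + m • x)
        = br a a' + m • br a x + l • br x a' + (l * m) • br x x := by
      simp only [map_add, map_smul, LinearMap.add_apply, LinearMap.smul_apply]
      module
    rw [expand]
    refine add_mem (add_mem (add_mem ?_ ?_) ?_) ?_
    · rw [(hab a ha a' ha').2]; exact Submodule.zero_mem _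
    · exact Submodule.smul_mem _ _ hbax
    · exact Submodule.smul_mem _ _ (hba a' ha')
    · rw [hskew x]; exact Submodule.smul_mem _ _ (Submodule.zero_mem _)

/-- The key lemma: a Lie hyperplane over `A` yields a Poisson hyperplane over `A`. -/
private lemma exists_poisson [FiniteDimensional F P]
    (mul br : P →ₗ[F] P →ₗ[F] P)
    (hcomm : ∀ x y, mul x y = mul y x)
    (hassoc : ∀ x y z, mul (mul x y) z = mul x (mul y z))
    (hskew : ∀ x, br x x = 0)
    (hleib : ∀ x y z, br (mul x y) z = mul (br x z) y + mul x (br y z))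
    (A : Submodule F P) (hab : IsAbelian mul br A)
    (hdim : Module.finrank F A + 2 = Module.finrank F P)
    (B : Submodule F P) (hB : IsSubalgL br B) (hAB : A < B) (hBtop : B ≠ ⊤) :
    ∃ C : Submodule F P, IsSubalg mul br C ∧ A < C ∧ C ≠ ⊤ := by
  have mkC : ∀ x : P, x ∉ A →
      (∀ a ∈ A, mul x a ∈ A ⊔ Submodule.span F {x}) →
      (∀ a ∈ A, br x a ∈ A ⊔ Submodule.span F {x}) →
      mul x x ∈ A ⊔ Submodule.span F {x} →
      ∃ C : Submodule F P, IsSubalg mul br C ∧ A < C ∧ C ≠ ⊤ := by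
    intro x hx h1 h2 h3
    refine ⟨A ⊔ Submodule.span F {x}, subalg_gen mul br hcomm hskew A hab x h1 h2 h3, ?_, ?_⟩
    · refine lt_of_le_of_ne le_sup_left (fun h => hx ?_)
      rw [h]
      exact Submodule.mem_sup_right (Submodule.mem_span_singleton_self x)
    · intro htop
      have hf := aux_finrank_sup A hx
      rw [htop, finrank_top] at hf
      omega
  by_cases hρ : ∀ x : P, ∀ a ∈ A, mul x a ∈ A
  · -- Case II : A "absorbs" multiplication
    obtain ⟨b, hbB, hbA⟩ := SetLike.exists_of_lt hAB
    have hAleB : A ≤ B := le_of_lt hAB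
    have hBeq : B = A ⊔ Submodule.span F {b} := by
      have hle : A ⊔ Submodule.span F {b} ≤ B :=
        sup_le hAleB ((Submodule.span_singleton_le_iff_mem b B).mpr hbB)
      by_contra hne
      have hlt : A ⊔ Submodule.span F {b} < B := lt_of_le_of_ne hle (fun h => hne h.symm)
      have h1 := Submodule.finrank_lt_finrank_of_lt hlt
      rw [aux_finrank_sup A hbA] at h1
      have h2 : Module.finrank F ↥B ≤ Module.finrank F P := Submodule.finrank_le B
      exact hBtop (Submodule.eq_top_of_finrank_eq (le_antisymm h2 (by omega)))
    by_cases hbb : mul b b ∈ A ⊔ Submodule.span F {b}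
    · -- Case II.a : B itself is a Poisson subalgebra
      refine mkC b hbA (fun a ha => ?_) (fun a ha => ?_) hbb
      · exact Submodule.mem_sup_left (hρ b a ha)
      · have h := hB b hbB a (hAleB ha)
        rwa [hBeq] at h
    · -- Case II.b : take v = b² - β b where b³ = a₂ + α b + β b²
      have hb2A : mul b b ∉ A := fun h => hbb (Submodule.mem_sup_left h)
      have htop : (A ⊔ Submodule.span F {b}) ⊔ Submodule.span F {mul b b} = ⊤ := by
        apply Submodule.eq_top_of_finrank_eq
        refine le_antisymm (Submodule.finrank_le _) ?_
        rw [aux_finrank_sup _ hbb, aux_finrank_sup A hbA]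
        omega
      have hb3mem : mul b (mul b b) ∈ (A ⊔ Submodule.span F {b}) ⊔ Submodule.span F {mul b b} :=
        htop ▸ Submodule.mem_top
      obtain ⟨y, hy, s, hs, heq⟩ := Submodule.mem_sup.mp hb3mem
      obtain ⟨a₂, ha₂, t, ht, rfl⟩ := Submodule.mem_sup.mp hy
      obtain ⟨α, rfl⟩ := Submodule.mem_span_singleton.mp ht
      obtain ⟨β, rfl⟩ := Submodule.mem_span_singleton.mp hs
      have hb3 : mul b (mul b b) = a₂ + α • b + β • mul b b := heq.symm
      have indep : ∀ c₁ c₂ : F, c₁ • b + c₂ • mul b b ∈ A → c₁ = 0 ∧ c₂ = 0 := by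
        intro c₁ c₂ hmem
        have hc₂ : c₂ = 0 := by
          by_contra hc
          apply hbb
          have h1 : mul b b = c₂⁻¹ • ((c₁ • b + c₂ • mul b b) - c₁ • b) := by
            rw [add_sub_cancel_left, smul_smul, inv_mul_cancel₀ hc, one_smul]
          rw [h1]
          exact Submodule.smul_mem _ _ (Submodule.sub_mem _ (Submodule.mem_sup_left hmem)
            (Submodule.smul_mem _ _ (Submodule.mem_sup_right (Submodule.mem_span_singleton_self b))))
        rw [hc₂, zero_smul, add_zero] at hmem
        refine ⟨?_, hc₂⟩
        by_contra hc
        exact hbA ((A.smul_mem_iff hc).mp hmem)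
      have h4 : mul (mul b b) b = mul b (mul b b) := hcomm (mul b b) b
      have h5 : mul (mul b b) (mul b b)
          = mul b a₂ + α • mul b b + β • (a₂ + α • b + β • mul b b) := by
        rw [hassoc b b (mul b b), hb3]
        simp only [map_add, map_smul]
        rw [hb3]
      set v : P := mul b b - β • b with hv
      have hvA : v ∉ A := by
        intro h
        apply hbb
        have hrw : mul b b = v + β • b := by rw [hv]; abel
        rw [hrw]
        exact add_mem (Submodule.mem_sup_left h)
          (Submodule.smul_mem _ _ (Submodule.mem_sup_right (Submodule.mem_span_singleton_self b)))
      have hmvv : mul v v = α • v + (mul b a₂ - β • a₂) := by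
        rw [hv]
        simp only [map_sub, map_smul, LinearMap.sub_apply, LinearMap.smul_apply]
        rw [h5, h4, hb3]
        module
      refine mkC v hvA (fun a ha => ?_) (fun a ha => ?_) ?_
      · -- mul v a ∈ A ⊔ span v
        have hrw : mul v a = mul (mul b b) a - β • mul b a := by
          rw [hv]
          simp only [map_sub, map_smul, LinearMap.sub_apply, LinearMap.smul_apply]
        rw [hrw]
        exact Submodule.mem_sup_left (A.sub_mem (hρ _ a ha) (A.smul_mem _ (hρ b a ha)))
      · -- br v a ∈ A ⊔ span v
        have hbaB : br b a ∈ A ⊔ Submodule.span F {b} := by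
          rw [← hBeq]; exact hB b hbB a (hAleB ha)
        obtain ⟨a', ha', s, hs, hdec⟩ := Submodule.mem_sup.mp hbaB
        obtain ⟨bb, rfl⟩ := Submodule.mem_span_singleton.mp hs
        have hdec' : br b a = a' + bb • b := hdec.symm
        have h1 : br (mul b b) a = (2 * bb) • mul b b + (2:F) • mul b a' := by
          rw [hleib b b a, hdec']
          simp only [map_add, map_smul, LinearMap.add_apply, LinearMap.smul_apply]
          rw [hcomm a' b]
          module
        have h2 : br (mul b (mul b b)) a
            = (3 * bb) • mul b (mul b b) + (mul (mul b b) a' + (2:F) • mul b (mul b a')) := by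
          rw [hleib b (mul b b) a, hdec', h1]
          simp only [map_add, map_smul, LinearMap.add_apply, LinearMap.smul_apply]
          rw [hcomm a' (mul b b)]
          module
        have h3 : br (mul b (mul b b)) a
            = (α * bb) • b + (2 * (β * bb)) • mul b b + (α • a' + (2 * β) • mul b a') := by
          rw [hb3]
          simp only [map_add, map_smul, LinearMap.add_apply, LinearMap.smul_apply]
          rw [(hab a₂ ha₂ a ha).2, hdec', h1]
          module
        have e := h2.symm.trans h3
        rw [hb3] at e
        have key : (2 * (α * bb)) • b + (β * bb) • mul b b ∈ A := by
          have keq : (2 * (α * bb)) • b + (β * bb) • mul b b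
              = ((α • a' + (2 * β) • mul b a') - (3 * bb) • a₂ - mul (mul b b) a'
                  - (2:F) • mul b (mul b a'))
                + (((3 * bb) • (a₂ + α • b + β • mul b b)
                    + (mul (mul b b) a' + (2:F) • mul b (mul b a')))
                   - ((α * bb) • b + (2 * (β * bb)) • mul b b
                      + (α • a' + (2 * β) • mul b a'))) := by
            module
          rw [keq, e, sub_self, add_zero]
          refine A.sub_mem (A.sub_mem (A.sub_mem ?_ ?_) ?_) ?_
          · exact A.add_mem (A.smul_mem _ ha') (A.smul_mem _ (hρ b a' ha'))
          · exact A.smul_mem _ ha₂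
          · exact hρ _ a' ha'
          · exact A.smul_mem _ (hρ b _ (hρ b a' ha'))
        have hββ : β * bb = 0 := (indep _ _ key).2
        have hbrva : br v a = (2 * bb) • mul b b - (β * bb) • b + ((2:F) • mul b a' - β • a') := by
          rw [hv]
          simp only [map_sub, map_smul, LinearMap.sub_apply, LinearMap.smul_apply]
          rw [h1, hdec']
          module
        rw [hββ, zero_smul, sub_zero] at hbrva
        rcases eq_or_ne bb 0 with hbb0 | hbb0
        · rw [hbb0, mul_zero, zero_smul, zero_add] at hbrva
          rw [hbrva]
          exact Submodule.mem_sup_left (A.sub_mem (A.smul_mem _ (hρ b a' ha')) (A.smul_mem _ ha'))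
        · have hβ0 : β = 0 := by
            rcases mul_eq_zero.mp hββ with h | h
            · exact h
            · exact absurd h hbb0
          have hveq : mul b b = v := by rw [hv, hβ0, zero_smul, sub_zero]
          rw [hveq] at hbrva
          rw [hbrva]
          exact add_mem
            (Submodule.smul_mem _ _ (Submodule.mem_sup_right (Submodule.mem_span_singleton_self v)))
            (Submodule.mem_sup_left (A.sub_mem (A.smul_mem _ (hρ b a' ha')) (A.smul_mem _ ha')))
      · -- mul v v ∈ A ⊔ span v
        rw [hmvv]
        exact add_mem
          (Submodule.smul_mem _ _ (Submodule.mem_sup_right (Submodule.mem_span_singleton_self v)))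
          (Submodule.mem_sup_left (A.sub_mem (hρ b a₂ ha₂) (A.smul_mem _ ha₂)))
  · -- Case I : some mul x a₀ ∉ A
    push_neg at hρ
    obtain ⟨u, a₀, ha₀, hu⟩ := hρ
    have hxa : ∀ a ∈ A, mul (mul u a₀) a = 0 := by
      intro a ha
      rw [hassoc u a₀ a, (hab a₀ ha₀ a ha).1, map_zero]
    have hker : ∀ w : P, mul w a₀ ∈ A → w ∈ A ⊔ Submodule.span F {mul u a₀} := by
      intro w hw
      by_contra hwmem
      have htop : (A ⊔ Submodule.span F {mul u a₀}) ⊔ Submodule.span F {w} = ⊤ := by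
        apply Submodule.eq_top_of_finrank_eq
        refine le_antisymm (Submodule.finrank_le _) ?_
        rw [aux_finrank_sup _ hwmem, aux_finrank_sup A hu]
        omega
      have humem : u ∈ (A ⊔ Submodule.span F {mul u a₀}) ⊔ Submodule.span F {w} :=
        htop ▸ Submodule.mem_top
      obtain ⟨y, hy, s, hs, hequ⟩ := Submodule.mem_sup.mp humem
      obtain ⟨a, ha, t, ht, rfl⟩ := Submodule.mem_sup.mp hy
      obtain ⟨l, rfl⟩ := Submodule.mem_span_singleton.mp ht
      obtain ⟨m, rfl⟩ := Submodule.mem_span_singleton.mp hs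
      apply hu
      rw [← hequ]
      simp only [map_add, map_smul, LinearMap.add_apply, LinearMap.smul_apply]
      refine A.add_mem (A.add_mem ?_ ?_) ?_
      · rw [(hab a ha a₀ ha₀).1]; exact A.zero_mem
      · rw [hxa a₀ ha₀, smul_zero]; exact A.zero_mem
      · exact A.smul_mem m hw
    have hxx0 : mul (mul u a₀) (mul u a₀) = 0 := by
      rw [hassoc u a₀ (mul u a₀), hcomm a₀ (mul u a₀), hxa a₀ ha₀, map_zero]
    refine mkC (mul u a₀) hu (fun a ha => ?_) (fun a ha => ?_) ?_
    · rw [hxa a ha]; exact Submodule.zero_mem _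
    · apply hker
      have hl := hleib (mul u a₀) a₀ a
      rw [hxa a₀ ha₀, (hab a₀ ha₀ a ha).2] at hl
      simp only [map_zero, LinearMap.zero_apply, add_zero] at hl
      rw [← hl]
      exact A.zero_mem
    · rw [hxx0]; exact Submodule.zero_mem _

/-- An abelian subalgebra of codimension two of a Poisson algebra is a maximal
subalgebra of `P` iff it is a maximal subalgebra of the Lie algebra `P_L`. -/
theorem maximal_iff_maximal_lie [FiniteDimensional F P]
    (mul br : P →ₗ[F] P →ₗ[F] P)
    (hcomm : ∀ x y, mul x y = mul y x)
    (hassoc : ∀ x y z, mul (mul x y) z = mul x (mul y z))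
    (hskew : ∀ x, br x x = 0)
    (hjac : ∀ x y z, br (br x y) z + br (br y z) x + br (br z x) y = 0)
    (hleib : ∀ x y z, br (mul x y) z = mul (br x z) y + mul x (br y z))
    (A : Submodule F P) (hab : IsAbelian mul br A)
    (hdim : Module.finrank F A + 2 = Module.finrank F P) :
    ((A ≠ ⊤ ∧ ∀ B : Submodule F P, IsSubalg mul br B → A < B → B = ⊤) ↔
     (A ≠ ⊤ ∧ ∀ B : Submodule F P, IsSubalgL br B → A < B → B = ⊤)) := by
  constructor
  · rintro ⟨hA, hmax⟩
    refine ⟨hA, fun B hB hABlt => ?_⟩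
    by_contra hBtop
    obtain ⟨C, hC, hAC, hCtop⟩ :=
      exists_poisson mul br hcomm hassoc hskew hleib A hab hdim B hB hABlt hBtop
    exact hCtop (hmax C hC hAC)
  · rintro ⟨hA, hmax⟩
    exact ⟨hA, fun B hB hABlt => hmax B (fun x hx y hy => (hB x hx y hy).2) hABlt⟩
end

section
/- Over a field F of characteristic ≠ 2, the Lie algebra L₁(γ) with basis e₁, e₂, e₃ and brackets [e₁,e₂] = e₂, [e₁,e₃] = γe₂ − e₃, [e₂,e₃] = e₁ is isomorphic to sl₂(F), via the change of basis E₁ = e₁, E₂ = e₂, E₃ = −(γ/2)e₂ + e₃ giving [E₁,E₂] = E₂, [E₁,E₃] = −E₃, [E₂,E₃] = E₁. -/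
open LieAlgebra.SpecialLinear in
set_option maxHeartbeats 1000000 in
/-- Over a field of characteristic ≠ 2, the Lie algebra `L₁(γ)` with basis
`e₁, e₂, e₃`, `[e₁,e₂] = e₂`, `[e₁,e₃] = γe₂ − e₃`, `[e₂,e₃] = e₁`, is
isomorphic to `sl₂(F)`, and the basis `E₁ = e₁`, `E₂ = e₂`,
`E₃ = −(γ/2)e₂ + e₃` satisfies `[E₁,E₂] = E₂`, `[E₁,E₃] = −E₃`,
`[E₂,E₃] = E₁`. -/
theorem L1_iso_sl2 {F : Type*} [Field F] (h2 : (2 : F) ≠ 0)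
    {L : Type*} [LieRing L] [LieAlgebra F L]
    (γ : F) (e : Module.Basis (Fin 3) F L)
    (h12 : ⁅e 0, e 1⁆ = e 1)
    (h13 : ⁅e 0, e 2⁆ = γ • e 1 - e 2)
    (h23 : ⁅e 1, e 2⁆ = e 0) :
    (⁅e 0, e 1⁆ = e 1 ∧
     ⁅e 0, -(γ / 2) • e 1 + e 2⁆ = -(-(γ / 2) • e 1 + e 2) ∧
     ⁅e 1, -(γ / 2) • e 1 + e 2⁆ = e 0) ∧
    Nonempty (L ≃ₗ⁅F⁆ LieAlgebra.SpecialLinear.sl (Fin 2) F) := by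
  refine ⟨⟨h12, ?_, ?_⟩, ?_⟩
  · rw [lie_add, lie_smul, h12, h13]; match_scalars <;> field_simp <;> ring
  · rw [lie_add, lie_smul, lie_self, h23]; match_scalars <;> field_simp <;> ring
  -- the three target elements of sl₂
  set S := sl (Fin 2) F with hS
  have mem : ∀ a b c : F, (!![a, b; c, -a] : Matrix (Fin 2) (Fin 2) F) ∈ S := by
    intro a b c
    show _ ∈ LinearMap.ker (Matrix.traceLinearMap (Fin 2) F F)
    simp [Matrix.trace_fin_two]
  set v0 : S := ⟨!![2⁻¹, 0; 0, -2⁻¹], by simpa using mem 2⁻¹ 0 0⟩ with hv0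
  set v1 : S := ⟨!![0, 1; 0, 0], by simpa using mem 0 1 0⟩ with hv1
  set v2 : S := ⟨!![0, γ/2; 2⁻¹, 0], by simpa using mem 0 (γ/2) 2⁻¹⟩ with hv2
  set f : L →ₗ[F] S := e.constr F ![v0, v1, v2] with hf
  have hfe : ∀ i, f (e i) = ![v0, v1, v2] i := fun i => e.constr_basis F _ i
  have hf0 : f (e 0) = v0 := hfe 0
  have hf1 : f (e 1) = v1 := hfe 1
  have hf2 : f (e 2) = v2 := hfe 2
  -- inverse linear map
  set g : S →ₗ[F] L :=
    { toFun := fun A => (2 * A.val 0 0) • e 0 + (A.val 0 1 - γ * A.val 1 0) • e 1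
        + (2 * A.val 1 0) • e 2
      map_add' := by
        intro A B
        simp only [AddMemClass.coe_add, Matrix.add_apply]
        module
      map_smul' := by
        intro c A
        have hc : ((c • A : S) : Matrix (Fin 2) (Fin 2) F) = c • (A : Matrix (Fin 2) (Fin 2) F) := rfl
        simp only [hc, Matrix.smul_apply, smul_eq_mul, RingHom.id_apply]
        module } with hg
  have hgval : ∀ A : S, g A = (2 * A.val 0 0) • e 0 + (A.val 0 1 - γ * A.val 1 0) • e 1
        + (2 * A.val 1 0) • e 2 := fun A => rfl
  have hgf : ∀ i, g (f (e i)) = e i := by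
    have c0 : g (f (e 0)) = e 0 := by
      rw [hf0, hgval, hv0]; norm_num; match_scalars <;> field_simp
    have c1 : g (f (e 1)) = e 1 := by
      rw [hf1, hgval, hv1]; norm_num
    have c2 : g (f (e 2)) = e 2 := by
      rw [hf2, hgval, hv2]; norm_num; match_scalars <;> field_simp <;> ring
    intro i
    fin_cases i
    · exact c0
    · exact c1
    · exact c2
  have hfg : ∀ A : S, f (g A) = A := by
    intro A
    have htr : A.val 1 1 = -A.val 0 0 := by
      have h := A.2
      have : Matrix.trace A.val = 0 := h
      rw [Matrix.trace_fin_two] at this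
      linear_combination this
    apply Subtype.ext
    rw [hgval]
    simp only [map_add, map_smul, hf0, hf1, hf2]
    rw [hv0, hv1, hv2]
    show (2 * A.val 0 0) • (!![2⁻¹, 0; 0, -2⁻¹] : Matrix (Fin 2) (Fin 2) F)
        + (A.val 0 1 - γ * A.val 1 0) • !![0, 1; 0, 0] + (2 * A.val 1 0) • !![0, γ/2; 2⁻¹, 0]
        = A.val
    have : A.val = !![A.val 0 0, A.val 0 1; A.val 1 0, A.val 1 1] := by
      ext i j; fin_cases i <;> fin_cases j <;> rfl
    rw [this, htr]
    ext i j
    fin_cases i <;> fin_cases j <;>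
      simp [Matrix.smul_apply] <;> field_simp <;> ring
  -- brackets of the vᵢ
  have b01 : ⁅v0, v1⁆ = v1 := by
    apply Subtype.ext
    show (!![2⁻¹,0;0,-2⁻¹] : Matrix (Fin 2) (Fin 2) F) * !![0,1;0,0]
        - !![0,1;0,0] * !![2⁻¹,0;0,-2⁻¹] = !![0,1;0,0]
    ext a b
    fin_cases a <;> fin_cases b <;>
      · simp [Matrix.mul_apply, Fin.sum_univ_two]
        try field_simp
        try norm_num
  have b02 : ⁅v0, v2⁆ = γ • v1 - v2 := by
    apply Subtype.ext
    show (!![2⁻¹,0;0,-2⁻¹] : Matrix (Fin 2) (Fin 2) F) * !![0, γ/2; 2⁻¹, 0]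
        - !![0, γ/2; 2⁻¹, 0] * !![2⁻¹,0;0,-2⁻¹]
        = γ • !![0,1;0,0] - !![0, γ/2; 2⁻¹, 0]
    ext a b
    fin_cases a <;> fin_cases b <;>
      · simp [Matrix.mul_apply, Fin.sum_univ_two]
        try field_simp
        try ring
  have b12 : ⁅v1, v2⁆ = v0 := by
    apply Subtype.ext
    show (!![0,1;0,0] : Matrix (Fin 2) (Fin 2) F) * !![0, γ/2; 2⁻¹, 0]
        - !![0, γ/2; 2⁻¹, 0] * !![0,1;0,0] = !![2⁻¹,0;0,-2⁻¹]
    ext a b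
    fin_cases a <;> fin_cases b <;>
      · simp [Matrix.mul_apply, Fin.sum_univ_two]
        try field_simp
        try ring
  have b10 : ⁅v1, v0⁆ = -v1 := by rw [← lie_skew, b01]
  have b20 : ⁅v2, v0⁆ = -(γ • v1 - v2) := by rw [← lie_skew, b02]
  have b21 : ⁅v2, v1⁆ = -v0 := by rw [← lie_skew, b12]
  have key : ∀ i j : Fin 3, f ⁅e i, e j⁆ = ⁅f (e i), f (e j)⁆ := by
    have h00 : ⁅e 0, e 0⁆ = (0 : L) := lie_self _
    have h11 : ⁅e 1, e 1⁆ = (0 : L) := lie_self _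
    have h22 : ⁅e 2, e 2⁆ = (0 : L) := lie_self _
    have h21 : ⁅e 1, e 0⁆ = -(e 1) := by rw [← lie_skew, h12]
    have h31 : ⁅e 2, e 0⁆ = -(γ • e 1 - e 2) := by rw [← lie_skew, h13]
    have h32 : ⁅e 2, e 1⁆ = -(e 0) := by rw [← lie_skew, h23]
    have k00 : f ⁅e 0, e 0⁆ = ⁅f (e 0), f (e 0)⁆ := by
      simp only [h00, hf0, lie_self, map_zero]
    have k11 : f ⁅e 1, e 1⁆ = ⁅f (e 1), f (e 1)⁆ := by
      simp only [h11, hf1, lie_self, map_zero]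
    have k22 : f ⁅e 2, e 2⁆ = ⁅f (e 2), f (e 2)⁆ := by
      simp only [h22, hf2, lie_self, map_zero]
    have k01 : f ⁅e 0, e 1⁆ = ⁅f (e 0), f (e 1)⁆ := by
      simp only [h12, hf0, hf1, b01]
    have k02 : f ⁅e 0, e 2⁆ = ⁅f (e 0), f (e 2)⁆ := by
      simp only [h13, hf0, hf2, b02, map_sub, map_smul, hf1]
    have k12 : f ⁅e 1, e 2⁆ = ⁅f (e 1), f (e 2)⁆ := by
      simp only [h23, hf1, hf2, b12, hf0]
    have k10 : f ⁅e 1, e 0⁆ = ⁅f (e 1), f (e 0)⁆ := by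
      simp only [h21, hf1, hf0, b10, map_neg]
    have k20 : f ⁅e 2, e 0⁆ = ⁅f (e 2), f (e 0)⁆ := by
      simp only [h31, hf2, hf0, b20, map_neg, map_sub, map_smul, hf1]
    have k21 : f ⁅e 2, e 1⁆ = ⁅f (e 2), f (e 1)⁆ := by
      simp only [h32, hf2, hf1, b21, map_neg, hf0]
    intro i j
    fin_cases i <;> fin_cases j
    exacts [k00, k01, k02, k10, k11, k12, k20, k21, k22]
  have key' : ∀ x y : L, f ⁅x, y⁆ = ⁅f x, f y⁆ := by
    let B1 : L →ₗ[F] L →ₗ[F] S :=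
      { toFun := fun x => f ∘ₗ (LieAlgebra.ad F L x)
        map_add' := by intro x y; ext z; simp
        map_smul' := by intro c x; ext z; simp }
    let B2 : L →ₗ[F] L →ₗ[F] S :=
      { toFun := fun x => (LieAlgebra.ad F S (f x)) ∘ₗ f
        map_add' := by intro x y; ext z; simp
        map_smul' := by intro c x; ext z; simp }
    have : B1 = B2 := LinearMap.ext_basis e e (fun i j => key i j)
    intro x y
    exact LinearMap.congr_fun (LinearMap.congr_fun this x) y
  have hcomp1 : f ∘ₗ g = LinearMap.id := LinearMap.ext hfg
  have hcomp2 : g ∘ₗ f = LinearMap.id := by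
    apply Module.Basis.ext e
    intro i
    simpa using hgf i
  exact ⟨{ toLinearMap := f
           map_lie' := by intro x y; exact key' x y
           invFun := g
           left_inv := fun x => by simpa using LinearMap.congr_fun hcomp2 x
           right_inv := fun A => by simpa using LinearMap.congr_fun hcomp1 A }⟩
end

section
/- Let P be a complex Poisson algebra whose underlying Lie algebra is the model filiform Lie algebra Lⁿ (n ≥ 3) with basis x₀,...,x_{n−1} and brackets [x₀, xᵢ] = x_{i+1} for 1 ≤ i ≤ n−2. Then the associative commutative product of P is determined by constants λ₁, λ₂, λ₃ ∈ ℂ with the only possibly nonzero products x₀x₀ = λ₁x_{n−1}, x₀x₁ = λ₂x_{n−1}, x₁x₁ = λ₃x_{n−1}. -/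
set_option maxHeartbeats 1000000 in
/-- On a complex Poisson algebra whose Lie part is the model filiform Lie
algebra `Lⁿ` (`n ≥ 3`), the commutative product is given, for some
`λ₁, λ₂, λ₃ ∈ ℂ`, by `x₀x₀ = λ₁x_{n−1}`, `x₀x₁ = λ₂x_{n−1}`,
`x₁x₁ = λ₃x_{n−1}`, all other basis products being zero. -/
theorem poisson_model_filiform
    {P : Type*} [AddCommGroup P] [Module ℂ P]
    (n : ℕ) (hn : 3 ≤ n)
    (mul br : P →ₗ[ℂ] P →ₗ[ℂ] P)
    (hcomm : ∀ u v, mul u v = mul v u)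
    (hassoc : ∀ u v w, mul (mul u v) w = mul u (mul v w))
    (hskew : ∀ u, br u u = 0)
    (hjac : ∀ u v w, br (br u v) w + br (br v w) u + br (br w u) v = 0)
    (hleib : ∀ u v w, br (mul u v) w = mul (br u w) v + mul u (br v w))
    (x : Module.Basis (Fin n) ℂ P)
    (hbr : ∀ i j : Fin n, br (x i) (x j) =
      if h : i.1 = 0 ∧ 1 ≤ j.1 ∧ j.1 ≤ n - 2 then x ⟨j.1 + 1, by omega⟩
      else if h' : j.1 = 0 ∧ 1 ≤ i.1 ∧ i.1 ≤ n - 2 then -x ⟨i.1 + 1, by omega⟩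
      else 0) :
    ∃ l1 l2 l3 : ℂ,
      mul (x ⟨0, by omega⟩) (x ⟨0, by omega⟩) = l1 • x ⟨n - 1, by omega⟩ ∧
      mul (x ⟨0, by omega⟩) (x ⟨1, by omega⟩) = l2 • x ⟨n - 1, by omega⟩ ∧
      mul (x ⟨1, by omega⟩) (x ⟨1, by omega⟩) = l3 • x ⟨n - 1, by omega⟩ ∧
      ∀ i j : Fin n, ¬(i.1 ≤ 1 ∧ j.1 ≤ 1) → mul (x i) (x j) = 0 := by
  have h0 : 0 < n := by omega
  have h1 : 1 < n := by omega
  have h2 : 2 < n := by omega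
  have hl : n - 1 < n := by omega
  -- basis bracket helpers
  have hbrA : ∀ (k i : Fin n) (h1 : 1 ≤ i.1) (h2 : i.1 ≤ n - 2),
      br (x k) (x i) = if k.1 = 0 then x ⟨i.1 + 1, by omega⟩ else 0 := by
    intro k i hi1 hi2
    rw [hbr]
    by_cases hk : k.1 = 0
    · rw [dif_pos ⟨hk, hi1, hi2⟩, if_pos hk]
    · rw [dif_neg (by tauto), dif_neg (by omega), if_neg hk]
  have hbrB : ∀ (k : Fin n), br (x k) (x ⟨0, h0⟩) =
      if h : 1 ≤ k.1 ∧ k.1 ≤ n - 2 then -x ⟨k.1 + 1, by omega⟩ else 0 := by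
    intro k
    rw [hbr]
    simp only [Fin.val_mk]
    by_cases hk : 1 ≤ k.1 ∧ k.1 ≤ n - 2
    · rw [dif_neg (by omega), dif_pos ⟨by trivial, hk⟩, dif_pos hk]
    · rw [dif_neg (by omega), dif_neg (by simpa using hk), dif_neg hk]
  have hbrA0 : ∀ (i : Fin n) (hi1 : 1 ≤ i.1) (hi2 : i.1 ≤ n - 2),
      br (x ⟨0, h0⟩) (x i) = x ⟨i.1 + 1, by omega⟩ := by
    intro i hi1 hi2
    rw [hbrA ⟨0, h0⟩ i hi1 hi2, if_pos rfl]
  have hbrAz : ∀ (k i : Fin n) (hk : 1 ≤ k.1) (hi1 : 1 ≤ i.1) (hi2 : i.1 ≤ n - 2),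
      br (x k) (x i) = 0 := by
    intro k i hk hi1 hi2
    rw [hbrA k i hi1 hi2, if_neg (by omega)]
  have hbrv : ∀ (v : P) (i : Fin n) (hi1 : 1 ≤ i.1) (hi2 : i.1 ≤ n - 2),
      br v (x i) = x.repr v ⟨0, h0⟩ • x ⟨i.1 + 1, by omega⟩ := by
    intro v i hi1 hi2
    conv_lhs => rw [← x.sum_repr v]
    rw [map_sum, LinearMap.sum_apply]
    rw [Finset.sum_congr rfl (fun k _ => by
      rw [map_smul, LinearMap.smul_apply, hbrA k i hi1 hi2])]
    rw [Finset.sum_eq_single (⟨0, h0⟩ : Fin n)]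
    · rw [if_pos rfl]
    · intro k _ hk
      rw [if_neg (fun h => hk (Fin.ext h)), smul_zero]
    · intro h; exact absurd (Finset.mem_univ _) h
  have hbrv0 : ∀ (v : P) (k : Fin n) (hk1 : 1 ≤ k.1) (hk2 : k.1 ≤ n - 2),
      x.repr (br v (x ⟨0, h0⟩)) ⟨k.1 + 1, by omega⟩ = - x.repr v k := by
    intro v k hk1 hk2
    conv_lhs => rw [← x.sum_repr v]
    rw [map_sum, LinearMap.sum_apply, map_sum]
    rw [Finset.sum_congr rfl (fun m _ => by
      rw [map_smul, LinearMap.smul_apply, hbrB m, map_smul])]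
    rw [Finsupp.finset_sum_apply]
    rw [Finset.sum_eq_single k]
    · rw [dif_pos ⟨hk1, hk2⟩]
      simp [Finsupp.single_apply]
    · intro m _ hm
      have hmk : m.1 ≠ k.1 := fun h => hm (Fin.ext h)
      by_cases hc : 1 ≤ m.1 ∧ m.1 ≤ n - 2
      · rw [dif_pos hc]
        have hne : (⟨m.1 + 1, by omega⟩ : Fin n) ≠ (⟨k.1 + 1, by omega⟩ : Fin n) := by
          simp only [ne_eq, Fin.mk.injEq]; omega
        simp [Finsupp.single_apply, Finsupp.smul_apply, hne]
      · rw [dif_neg hc]; simp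
    · intro h; exact absurd (Finset.mem_univ _) h
  have hrec : ∀ v w : P, (∀ k, x.repr v k = x.repr w k) → v = w :=
    fun v w h => x.repr.injective (Finsupp.ext h)
  -- F1 : coefficient at 0 of products of positive-index basis vectors vanishes
  have F1 : ∀ (a b : Fin n) (ha : 1 ≤ a.1) (hb : 1 ≤ b.1),
      x.repr (mul (x a) (x b)) ⟨0, h0⟩ = 0 := by
    intro a b ha hb
    have e := hleib (x a) (x b) (x ⟨1, h1⟩)
    rw [hbrv (mul (x a) (x b)) ⟨1, h1⟩ (le_refl 1) (by omega : 1 ≤ n - 2)] at e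
    rw [hbrAz a ⟨1, h1⟩ ha (le_refl 1) (by omega : 1 ≤ n - 2)] at e
    rw [hbrAz b ⟨1, h1⟩ hb (le_refl 1) (by omega : 1 ≤ n - 2)] at e
    simp only [map_zero, LinearMap.zero_apply, LinearMap.map_zero, add_zero, zero_add] at e
    rcases smul_eq_zero.mp e with h | h
    · exact h
    · exact absurd h (x.ne_zero _)
  -- F2 : mul (x j) (x b) = c • x j  for j ≥ 2, b ≥ 1
  have F2 : ∀ (b j : Fin n) (hb : 1 ≤ b.1) (hj1 : 2 ≤ j.1),
      mul (x j) (x b) = x.repr (mul (x ⟨0, h0⟩) (x b)) ⟨0, h0⟩ • x j := by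
    intro b j hb hj1
    obtain ⟨i, hi⟩ : ∃ i : Fin n, i.1 = j.1 - 1 := ⟨⟨j.1 - 1, by omega⟩, rfl⟩
    have hi1 : 1 ≤ i.1 := by omega
    have hi2 : i.1 ≤ n - 2 := by omega
    have e := hleib (x ⟨0, h0⟩) (x b) (x i)
    rw [hbrv _ i hi1 hi2] at e
    rw [hbrA0 i hi1 hi2] at e
    rw [hbrAz b i hb hi1 hi2] at e
    have hj : (⟨i.1 + 1, by omega⟩ : Fin n) = j :=
      Fin.ext (by simp only [Fin.val_mk]; omega)
    rw [hj] at e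
    simp only [map_zero, LinearMap.map_zero, add_zero] at e
    exact e.symm
  -- F3 : mul x0 (x j) = ν • x j for j ≥ 2
  set ν : ℂ := x.repr (mul (x ⟨0, h0⟩) (x ⟨0, h0⟩)) ⟨0, h0⟩ / 2 with hνdef
  have F3 : ∀ (j : Fin n) (hj1 : 2 ≤ j.1), mul (x ⟨0, h0⟩) (x j) = ν • x j := by
    intro j hj1
    obtain ⟨i, hi⟩ : ∃ i : Fin n, i.1 = j.1 - 1 := ⟨⟨j.1 - 1, by omega⟩, rfl⟩
    have hi1 : 1 ≤ i.1 := by omega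
    have hi2 : i.1 ≤ n - 2 := by omega
    have e := hleib (x ⟨0, h0⟩) (x ⟨0, h0⟩) (x i)
    rw [hbrv _ i hi1 hi2] at e
    rw [hbrA0 i hi1 hi2] at e
    have hj : (⟨i.1 + 1, by omega⟩ : Fin n) = j :=
      Fin.ext (by simp only [Fin.val_mk]; omega)
    rw [hj] at e
    rw [hcomm (x j) (x ⟨0, h0⟩)] at e
    apply smul_right_injective P (two_ne_zero (α := ℂ))
    show (2 : ℂ) • (mul (x ⟨0, h0⟩)) (x j) = (2 : ℂ) • ν • x j
    rw [smul_smul, two_smul, ← e]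
    congr 1
    rw [hνdef]
    ring
  -- F4 : products of two indices ≥ 2 vanish
  have F4 : ∀ (b j : Fin n) (hb : 2 ≤ b.1) (hj : 2 ≤ j.1), mul (x j) (x b) = 0 := by
    intro b j hb hj
    rw [F2 b j (by omega) hj]
    have : x.repr (mul (x ⟨0, h0⟩) (x b)) ⟨0, h0⟩ = 0 := by
      rw [F3 b hb]
      simp only [map_smul, Module.Basis.repr_self, Finsupp.smul_apply, Finsupp.single_apply,
        smul_eq_mul]
      rw [if_neg (by simp only [ne_eq, Fin.ext_iff, Fin.val_mk]; omega), mul_zero]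
    rw [this, zero_smul]
  set μ : ℂ := x.repr (mul (x ⟨0, h0⟩) (x ⟨1, h1⟩)) ⟨0, h0⟩ with hμdef
  have F5 : ∀ (j : Fin n) (hj : 2 ≤ j.1), mul (x j) (x ⟨1, h1⟩) = μ • x j :=
    fun j hj => F2 ⟨1, h1⟩ j (le_refl 1) hj
  -- D : coefficient extraction via bracketing with x0
  have Dgen : ∀ (v w : P), br v (x ⟨0, h0⟩) = w →
      ∀ (k : Fin n) (hk1 : 1 ≤ k.1) (hk2 : k.1 ≤ n - 2),
        x.repr v k = - x.repr w ⟨k.1 + 1, by omega⟩ := by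
    intro v w hw k hk1 hk2
    have e := hbrv0 v k hk1 hk2
    rw [hw] at e
    rw [e, neg_neg]
  -- D00
  have hw00 : br (mul (x ⟨0, h0⟩) (x ⟨0, h0⟩)) (x ⟨0, h0⟩) = 0 := by
    rw [hleib, hskew]
    simp
  have D00 : ∀ (k : Fin n) (hk1 : 1 ≤ k.1) (hk2 : k.1 ≤ n - 2),
      x.repr (mul (x ⟨0, h0⟩) (x ⟨0, h0⟩)) k = 0 := by
    intro k hk1 hk2
    rw [Dgen _ _ hw00 k hk1 hk2]
    simp
  -- the bracket [x1, x0] = -x2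
  have hbr10 : br (x ⟨1, h1⟩) (x ⟨0, h0⟩) = -x ⟨2, h2⟩ := by
    rw [hbrB ⟨1, h1⟩, dif_pos ⟨le_refl 1, (show 1 ≤ n - 2 by omega)⟩]
  -- D01
  have hw01 : br (mul (x ⟨0, h0⟩) (x ⟨1, h1⟩)) (x ⟨0, h0⟩) = -(ν • x ⟨2, h2⟩) := by
    rw [hleib, hskew, hbr10, map_neg, F3 ⟨2, h2⟩ (le_refl 2)]
    simp
  have D01 : ∀ (k : Fin n) (hk1 : 1 ≤ k.1) (hk2 : k.1 ≤ n - 2),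
      x.repr (mul (x ⟨0, h0⟩) (x ⟨1, h1⟩)) k = if k.1 = 1 then ν else 0 := by
    intro k hk1 hk2
    rw [Dgen _ _ hw01 k hk1 hk2]
    simp only [map_neg, map_smul, Finsupp.neg_apply, Finsupp.smul_apply, Module.Basis.repr_self,
      Finsupp.single_apply, smul_eq_mul, neg_neg, Fin.mk.injEq]
    by_cases hk : k.1 = 1
    · rw [if_pos (by omega), if_pos hk, mul_one]
    · rw [if_neg (by omega), if_neg hk, mul_zero]
  -- D11
  have hw11 : br (mul (x ⟨1, h1⟩) (x ⟨1, h1⟩)) (x ⟨0, h0⟩) = -((2 * μ) • x ⟨2, h2⟩) := by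
    rw [hleib, hbr10]
    rw [map_neg, LinearMap.neg_apply, map_neg]
    rw [hcomm (x ⟨1, h1⟩) (x ⟨2, h2⟩), F5 ⟨2, h2⟩ (le_refl 2)]
    rw [← neg_add, two_mul, add_smul]
  have D11 : ∀ (k : Fin n) (hk1 : 1 ≤ k.1) (hk2 : k.1 ≤ n - 2),
      x.repr (mul (x ⟨1, h1⟩) (x ⟨1, h1⟩)) k = if k.1 = 1 then 2 * μ else 0 := by
    intro k hk1 hk2
    rw [Dgen _ _ hw11 k hk1 hk2]
    simp only [map_neg, map_smul, Finsupp.neg_apply, Finsupp.smul_apply, Module.Basis.repr_self,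
      Finsupp.single_apply, smul_eq_mul, neg_neg, Fin.mk.injEq]
    by_cases hk : k.1 = 1
    · rw [if_pos (by omega), if_pos hk, mul_one]
    · rw [if_neg (by omega), if_neg hk, mul_zero]
  -- closed forms
  set l1 : ℂ := x.repr (mul (x ⟨0, h0⟩) (x ⟨0, h0⟩)) ⟨n - 1, hl⟩ with hl1def
  set l2 : ℂ := x.repr (mul (x ⟨0, h0⟩) (x ⟨1, h1⟩)) ⟨n - 1, hl⟩ with hl2def
  set l3 : ℂ := x.repr (mul (x ⟨1, h1⟩) (x ⟨1, h1⟩)) ⟨n - 1, hl⟩ with hl3def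
  have Cl00 : mul (x ⟨0, h0⟩) (x ⟨0, h0⟩) = (2 * ν) • x ⟨0, h0⟩ + l1 • x ⟨n - 1, hl⟩ := by
    apply hrec
    intro k
    simp only [map_add, map_smul, Finsupp.add_apply, Finsupp.smul_apply, Module.Basis.repr_self,
      Finsupp.single_apply, smul_eq_mul]
    by_cases hk0 : k.1 = 0
    · have hk : k = ⟨0, h0⟩ := Fin.ext hk0
      subst hk
      rw [if_pos rfl, if_neg (by simp only [ne_eq, Fin.mk.injEq]; omega)]
      rw [mul_one, mul_zero, add_zero, hνdef]
      ring
    · by_cases hkl : k.1 = n - 1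
      · have hk : k = ⟨n - 1, hl⟩ := Fin.ext hkl
        subst hk
        rw [if_neg (by simp only [ne_eq, Fin.mk.injEq]; omega), if_pos rfl]
        rw [mul_zero, mul_one, zero_add]
      · rw [if_neg (by simp only [ne_eq, Fin.ext_iff, Fin.val_mk]; omega),
          if_neg (by simp only [ne_eq, Fin.ext_iff, Fin.val_mk]; omega)]
        rw [D00 k (by omega) (by omega)]
        ring
  have Cl01 : mul (x ⟨0, h0⟩) (x ⟨1, h1⟩) =
      μ • x ⟨0, h0⟩ + ν • x ⟨1, h1⟩ + l2 • x ⟨n - 1, hl⟩ := by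
    apply hrec
    intro k
    simp only [map_add, map_smul, Finsupp.add_apply, Finsupp.smul_apply, Module.Basis.repr_self,
      Finsupp.single_apply, smul_eq_mul]
    by_cases hk0 : k.1 = 0
    · have hk : k = ⟨0, h0⟩ := Fin.ext hk0
      subst hk
      rw [if_pos rfl, if_neg (by simp only [ne_eq, Fin.mk.injEq]; omega),
        if_neg (by simp only [ne_eq, Fin.mk.injEq]; omega)]
      rw [mul_one, mul_zero, mul_zero, add_zero, add_zero, hμdef]
    · by_cases hk1 : k.1 = 1
      · have hk : k = ⟨1, h1⟩ := Fin.ext hk1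
        subst hk
        rw [if_neg (by simp only [ne_eq, Fin.mk.injEq]; omega), if_pos rfl,
          if_neg (by simp only [ne_eq, Fin.mk.injEq]; omega)]
        rw [D01 ⟨1, h1⟩ (le_refl 1) (by omega), if_pos rfl]
        ring
      · by_cases hkl : k.1 = n - 1
        · have hk : k = ⟨n - 1, hl⟩ := Fin.ext hkl
          subst hk
          rw [if_neg (by simp only [ne_eq, Fin.mk.injEq]; omega),
            if_neg (by simp only [ne_eq, Fin.mk.injEq]; omega), if_pos rfl]
          ring
        · rw [if_neg (by simp only [ne_eq, Fin.ext_iff, Fin.val_mk]; omega),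
            if_neg (by simp only [ne_eq, Fin.ext_iff, Fin.val_mk]; omega),
            if_neg (by simp only [ne_eq, Fin.ext_iff, Fin.val_mk]; omega)]
          rw [D01 k (by omega) (by omega), if_neg hk1]
          ring
  have Cl11 : mul (x ⟨1, h1⟩) (x ⟨1, h1⟩) =
      (2 * μ) • x ⟨1, h1⟩ + l3 • x ⟨n - 1, hl⟩ := by
    apply hrec
    intro k
    simp only [map_add, map_smul, Finsupp.add_apply, Finsupp.smul_apply, Module.Basis.repr_self,
      Finsupp.single_apply, smul_eq_mul]
    by_cases hk0 : k.1 = 0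
    · have hk : k = ⟨0, h0⟩ := Fin.ext hk0
      subst hk
      rw [if_neg (by simp only [ne_eq, Fin.mk.injEq]; omega),
        if_neg (by simp only [ne_eq, Fin.mk.injEq]; omega)]
      rw [F1 ⟨1, h1⟩ ⟨1, h1⟩ (le_refl 1) (le_refl 1)]
      ring
    · by_cases hkl : k.1 = n - 1
      · have hk : k = ⟨n - 1, hl⟩ := Fin.ext hkl
        subst hk
        rw [if_neg (by simp only [ne_eq, Fin.mk.injEq]; omega), if_pos rfl]
        ring
      · by_cases hk1 : k.1 = 1
        · have hk : k = ⟨1, h1⟩ := Fin.ext hk1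
          subst hk
          rw [if_pos rfl, if_neg (by simp only [ne_eq, Fin.mk.injEq]; omega)]
          rw [D11 ⟨1, h1⟩ (le_refl 1) (by omega), if_pos rfl]
          ring
        · rw [if_neg (by simp only [ne_eq, Fin.ext_iff, Fin.val_mk]; omega),
            if_neg (by simp only [ne_eq, Fin.ext_iff, Fin.val_mk]; omega)]
          rw [D11 k (by omega) (by omega), if_neg hk1]
          ring
  -- associativity (x0 x0) x1 = x0 (x0 x1)  kills ν
  have hνzero : ν = 0 := by
    have e1 := hassoc (x ⟨0, h0⟩) (x ⟨0, h0⟩) (x ⟨1, h1⟩)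
    rw [Cl00, Cl01] at e1
    simp only [map_add, map_smul, LinearMap.add_apply, LinearMap.smul_apply] at e1
    rw [Cl00, Cl01, F5 ⟨n - 1, hl⟩ ((by omega : 2 ≤ n - 1)),
      F3 ⟨n - 1, hl⟩ ((by omega : 2 ≤ n - 1))] at e1
    have e2 := congrArg (fun v => x.repr v ⟨1, h1⟩) e1
    simp only [map_add, map_smul, Finsupp.add_apply, Finsupp.smul_apply, Module.Basis.repr_self,
      Finsupp.single_apply, smul_eq_mul, Fin.mk.injEq] at e2
    simp only [if_true, if_neg (show ¬(n - 1 = 1) by omega), if_neg (show ¬((0:ℕ) = 1) by omega),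
      mul_one, mul_zero, add_zero, zero_add] at e2
    have hsq : ν * ν = 0 := by linear_combination e2
    exact mul_self_eq_zero.mp hsq
  -- associativity (x1 x1) x0 = x1 (x1 x0)  kills μ
  have hμzero : μ = 0 := by
    have e1 := hassoc (x ⟨1, h1⟩) (x ⟨1, h1⟩) (x ⟨0, h0⟩)
    rw [hcomm (x ⟨1, h1⟩) (x ⟨0, h0⟩), Cl11, Cl01] at e1
    simp only [map_add, map_smul, LinearMap.add_apply, LinearMap.smul_apply] at e1
    rw [hcomm (x ⟨1, h1⟩) (x ⟨0, h0⟩), hcomm (x ⟨n - 1, hl⟩) (x ⟨0, h0⟩),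
      hcomm (x ⟨1, h1⟩) (x ⟨n - 1, hl⟩), Cl01, Cl11,
      F3 ⟨n - 1, hl⟩ ((by omega : 2 ≤ n - 1)),
      F5 ⟨n - 1, hl⟩ ((by omega : 2 ≤ n - 1))] at e1
    have e2 := congrArg (fun v => x.repr v ⟨0, h0⟩) e1
    simp only [map_add, map_smul, Finsupp.add_apply, Finsupp.smul_apply, Module.Basis.repr_self,
      Finsupp.single_apply, smul_eq_mul, Fin.mk.injEq, hνzero] at e2
    simp only [if_true, if_neg (show ¬(n - 1 = 0) by omega), if_neg (show ¬((1:ℕ) = 0) by omega),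
      mul_one, mul_zero, add_zero, zero_add, zero_mul] at e2
    have hsq : μ * μ = 0 := by linear_combination e2
    exact mul_self_eq_zero.mp hsq
  refine ⟨l1, l2, l3, ?_, ?_, ?_, ?_⟩
  · have : mul (x ⟨0, h0⟩) (x ⟨0, h0⟩) = l1 • x ⟨n - 1, hl⟩ := by
      rw [Cl00, hνzero]
      simp
    exact this
  · have : mul (x ⟨0, h0⟩) (x ⟨1, h1⟩) = l2 • x ⟨n - 1, hl⟩ := by
      rw [Cl01, hνzero, hμzero]
      simp
    exact this
  · have : mul (x ⟨1, h1⟩) (x ⟨1, h1⟩) = l3 • x ⟨n - 1, hl⟩ := by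
      rw [Cl11, hμzero]
      simp
    exact this
  · intro i j hij
    by_cases hi : 2 ≤ i.1
    · by_cases hj : 2 ≤ j.1
      · exact F4 j i hj hi
      · by_cases hj0 : j.1 = 0
        · have hk : j = ⟨0, h0⟩ := Fin.ext hj0
          rw [hk, hcomm (x i) (x ⟨0, h0⟩), F3 i hi, hνzero, zero_smul]
        · have hk : j = ⟨1, h1⟩ := Fin.ext (show j.1 = 1 by omega)
          rw [hk, F5 i hi, hμzero, zero_smul]
    · have hj : 2 ≤ j.1 := by omega
      by_cases hi0 : i.1 = 0
      · have hk : i = ⟨0, h0⟩ := Fin.ext hi0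
        rw [hk, F3 j hj, hνzero, zero_smul]
      · have hk : i = ⟨1, h1⟩ := Fin.ext (show i.1 = 1 by omega)
        rw [hk, hcomm (x ⟨1, h1⟩) (x j), F5 j hj, hμzero, zero_smul]
end
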